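/- arXiv:2212.14005 — 7 statements merged into one kernel-verified Lean document; each statement's English description precedes it below -/
import Mathlib

section
/- Let P be a finite poset with a linear extension x_1, ..., x_n of its elements, and let K = J(P) be the set of order ideals of P. Then the composition τ_{x_n} ∘ ⋯ ∘ τ_{x_1} of toggles applied in linear extension order equals rowmotion: for every order ideal I, (τ_{x_n} ∘ ⋯ ∘ τ_{x_1})(I) = P \ ∇(max(I)). -/
open Finset

variable {α : Type*} [Fintype α] [DecidableEq α] [PartialOrder α]
  [DecidableRel ((· ≤ ·) : α → α → Prop)]

/-- `I` is an order ideal (down-set) of the poset `α`. -/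
def IsOrderIdeal (I : Finset α) : Prop := ∀ x y : α, x ≤ y → y ∈ I → x ∈ I

instance : DecidablePred (IsOrderIdeal (α := α)) := fun I => by
  unfold IsOrderIdeal; infer_instance

/-- `∇(S) = {x : ∃ s ∈ S, s ≤ x}`. -/
def upSet (S : Finset α) : Finset α := univ.filter fun x => ∃ s ∈ S, s ≤ x

/-- The set of maximal elements of `I`. -/
def maxSet (I : Finset α) : Finset α := I.filter fun x => ∀ y ∈ I, x ≤ y → y = x

/-- The toggle `τ_z` acting on order ideals: `τ_z(I) = I △ {z}` if this is an order
ideal, and `I` otherwise. -/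
def toggleIdeal (z : α) (I : Finset α) : Finset α :=
  if IsOrderIdeal (symmDiff I {z}) then symmDiff I {z} else I

private lemma mem_rowT {I : Finset α} {x : α} :
    x ∈ univ \ upSet (maxSet I) ↔ ¬ ∃ m ∈ maxSet I, m ≤ x := by
  simp [upSet]

private lemma rowT_ideal {I : Finset α} : IsOrderIdeal (univ \ upSet (maxSet I)) := by
  intro x y hxy hy
  rw [mem_rowT] at hy ⊢
  rintro ⟨m, hm, hmx⟩
  exact hy ⟨m, hm, hmx.trans hxy⟩

/-- If `x ∈ I` is strictly below some element of `I`, then `x ∈ T`. -/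
private lemma mem_rowT_of_lt {I : Finset α} {x y : α} (hy : y ∈ I) (hxy : x < y) :
    x ∈ univ \ upSet (maxSet I) := by
  rw [mem_rowT]
  rintro ⟨m, hm, hmx⟩
  rw [maxSet, mem_filter] at hm
  have := hm.2 y hy (hmx.trans hxy.le)
  subst this
  exact absurd (hmx.trans_lt hxy) (lt_irrefl y)

private lemma key (I : Finset α) (hI : IsOrderIdeal I) :
    ∀ (l : List α) (S : Finset α), l.Nodup →
      List.Pairwise (fun a b => ¬ b < a) l →
      (∀ z ∈ l, z ∉ S) →
      (∀ y ∈ S, ∀ z ∈ l, ¬ z < y) →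
      (∀ x : α, x ∈ S ∨ x ∈ l) →
      l.foldl (fun A z => toggleIdeal z A)
        ((univ \ upSet (maxSet I)) ∩ S ∪ I \ S) = univ \ upSet (maxSet I) := by
  set T := univ \ upSet (maxSet I) with hT
  intro l
  induction l with
  | nil =>
    intro S _ _ _ _ h5
    simp only [List.foldl_nil]
    have hS : ∀ x : α, x ∈ S := by
      intro x
      rcases h5 x with h | h
      · exact h
      · exact absurd h List.not_mem_nil
    ext x
    simp [hS x]
  | cons z t ih =>
    intro S hnd hp h1 h3 h5
    set A : Finset α := T ∩ S ∪ I \ S with hA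
    have hmemA : ∀ x, x ∈ A ↔ (x ∈ T ∧ x ∈ S ∨ x ∈ I ∧ x ∉ S) := by
      intro x; simp [hA, and_comm]
    have hzS : z ∉ S := h1 z List.mem_cons_self
    -- everything strictly below z is in S
    have hbelow : ∀ x, x < z → x ∈ S := by
      intro x hx
      rcases h5 x with h | h
      · exact h
      · rcases List.mem_cons.mp h with rfl | h
        · exact absurd hx (lt_irrefl x)
        · exact absurd hx (List.rel_of_pairwise_cons hp h)
    -- nothing strictly above z is in S
    have habove : ∀ y ∈ S, ¬ z < y := fun y hy => h3 y hy z List.mem_cons_self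
    -- A is an order ideal
    have hAideal : IsOrderIdeal A := by
      intro x y hxy hy
      rw [hmemA] at hy ⊢
      rcases eq_or_lt_of_le hxy with rfl | hlt
      · exact hy
      rcases hy with ⟨hyT, hyS⟩ | ⟨hyI, hyS⟩
      · left
        refine ⟨rowT_ideal x y hxy hyT, ?_⟩
        by_contra hxS
        rcases h5 x with h | h
        · exact hxS h
        · exact h3 y hyS x h hlt
      · have hxI : x ∈ I := hI x y hxy hyI
        by_cases hxS : x ∈ S
        · exact Or.inl ⟨mem_rowT_of_lt hyI hlt, hxS⟩
        · exact Or.inr ⟨hxI, hxS⟩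
    have hstep : toggleIdeal z A = T ∩ insert z S ∪ I \ insert z S := by
      have hmemA' : ∀ x, x ∈ T ∩ insert z S ∪ I \ insert z S ↔
          (x ∈ T ∧ x ∈ insert z S ∨ x ∈ I ∧ x ∉ insert z S) := by
        intro x; simp [and_comm]
      have hzA : z ∈ A ↔ z ∈ I := by rw [hmemA]; simp [hzS]
      have hsd : ∀ x, x ∈ symmDiff A {z} ↔ (x ∈ A ∧ x ≠ z ∨ x = z ∧ x ∉ A) := by
        intro x; simp [mem_symmDiff]
      by_cases hzI : z ∈ I <;> by_cases hzT : z ∈ T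
      · -- z ∈ I, z ∈ T : toggle fails, z stays in
        have hnotmax : ∃ y ∈ I, z < y := by
          rw [hT, mem_rowT] at hzT
          push_neg at hzT
          by_contra hc
          push_neg at hc
          have hzmax : z ∈ maxSet I := by
            rw [maxSet, mem_filter]
            exact ⟨hzI, fun y hy hzy => by
              rcases eq_or_lt_of_le hzy with h | h
              · exact h.symm
              · exact absurd h (hc y hy)⟩
          exact hzT z hzmax le_rfl
        rcases hnotmax with ⟨y, hyI, hzy⟩
        have hyS : y ∉ S := fun h => habove y h hzy
        have hynot : IsOrderIdeal (symmDiff A {z}) → False := by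
          intro hid
          have hyA : y ∈ symmDiff A {z} := by
            rw [hsd]; exact Or.inl ⟨(hmemA y).mpr (Or.inr ⟨hyI, hyS⟩), fun h => absurd (h ▸ hzy) (lt_irrefl _)⟩
          have := hid z y hzy.le hyA
          rw [hsd] at this
          rcases this with ⟨_, h⟩ | ⟨_, h⟩
          · exact h rfl
          · exact h (hzA.mpr hzI)
        rw [toggleIdeal, if_neg hynot]
        ext x
        rw [hmemA, hmemA']
        constructor
        · rintro (⟨h1', h2'⟩ | ⟨h1', h2'⟩)
          · exact Or.inl ⟨h1', mem_insert_of_mem h2'⟩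
          · by_cases hxz : x = z
            · subst hxz; exact Or.inl ⟨hzT, mem_insert_self _ _⟩
            · exact Or.inr ⟨h1', fun h => (mem_insert.mp h).elim hxz h2'⟩
        · rintro (⟨h1', h2'⟩ | ⟨h1', h2'⟩)
          · rcases mem_insert.mp h2' with rfl | h
            · exact Or.inr ⟨hzI, hzS⟩
            · exact Or.inl ⟨h1', h⟩
          · exact Or.inr ⟨h1', fun h => h2' (mem_insert_of_mem h)⟩
      · -- z ∈ I, z ∉ T : z is maximal, toggle removes z
        have hzmax : ∀ y ∈ I, ¬ z < y := by
          intro y hy hzy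
          exact hzT (hT ▸ mem_rowT_of_lt hy hzy)
        have hid : IsOrderIdeal (symmDiff A {z}) := by
          intro x y hxy hy
          rw [hsd] at hy ⊢
          rcases hy with ⟨hyA, hyz⟩ | ⟨rfl, hyA⟩
          · have hxA : x ∈ A := hAideal x y hxy hyA
            left
            refine ⟨hxA, ?_⟩
            rintro rfl
            rcases eq_or_lt_of_le hxy with rfl | hlt
            · exact hyz rfl
            rw [hmemA] at hyA
            rcases hyA with ⟨_, hyS⟩ | ⟨hyI, _⟩
            · exact habove y hyS hlt
            · exact hzmax y hyI hlt
          · exact absurd (hzA.mpr hzI) hyA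
        rw [toggleIdeal, if_pos hid]
        ext x
        rw [hsd, hmemA, hmemA']
        constructor
        · rintro (⟨hxA, hxz⟩ | ⟨rfl, hxA⟩)
          · rcases hxA with ⟨h1', h2'⟩ | ⟨h1', h2'⟩
            · exact Or.inl ⟨h1', mem_insert_of_mem h2'⟩
            · exact Or.inr ⟨h1', fun h => (mem_insert.mp h).elim hxz h2'⟩
          · exact absurd (Or.inr ⟨hzI, hzS⟩) hxA
        · rintro (⟨h1', h2'⟩ | ⟨h1', h2'⟩)
          · rcases mem_insert.mp h2' with rfl | h
            · exact absurd h1' hzT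
            · exact Or.inl ⟨Or.inl ⟨h1', h⟩, fun hxz => hzS (hxz ▸ h)⟩
          · have hxz : x ≠ z := fun h => h2' (h ▸ mem_insert_self _ _)
            exact Or.inl ⟨Or.inr ⟨h1', fun h => h2' (mem_insert_of_mem h)⟩, hxz⟩
      · -- z ∉ I, z ∈ T : toggle adds z
        have hzA : z ∉ A := fun h => hzI (hzA.mp h)
        have hid : IsOrderIdeal (symmDiff A {z}) := by
          intro x y hxy hy
          rw [hsd] at hy ⊢
          by_cases hxz : x = z
          · exact Or.inr ⟨hxz, hxz ▸ hzA⟩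
          rcases hy with ⟨hyA, _⟩ | ⟨hyz, _⟩
          · exact Or.inl ⟨hAideal x y hxy hyA, hxz⟩
          · have hxz' : x ≤ z := hyz ▸ hxy
            have hlt : x < z := lt_of_le_of_ne hxz' hxz
            have hxS : x ∈ S := hbelow x hlt
            have hxT : x ∈ T := rowT_ideal x z hxz' hzT
            exact Or.inl ⟨(hmemA x).mpr (Or.inl ⟨hxT, hxS⟩), hxz⟩
        rw [toggleIdeal, if_pos hid]
        ext x
        rw [hsd, hmemA, hmemA']
        constructor
        · rintro (⟨hxA, hxz⟩ | ⟨rfl, _⟩)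
          · rcases hxA with ⟨h1', h2'⟩ | ⟨h1', h2'⟩
            · exact Or.inl ⟨h1', mem_insert_of_mem h2'⟩
            · exact Or.inr ⟨h1', fun h => (mem_insert.mp h).elim hxz h2'⟩
          · exact Or.inl ⟨hzT, mem_insert_self _ _⟩
        · rintro (⟨h1', h2'⟩ | ⟨h1', h2'⟩)
          · rcases mem_insert.mp h2' with rfl | h
            · exact Or.inr ⟨rfl, by rintro (⟨_, h⟩ | ⟨h, _⟩); exacts [hzS h, hzI h]⟩
            · exact Or.inl ⟨Or.inl ⟨h1', h⟩, fun hxz => hzS (hxz ▸ h)⟩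
          · have hxz : x ≠ z := fun h => h2' (h ▸ mem_insert_self _ _)
            exact Or.inl ⟨Or.inr ⟨h1', fun h => h2' (mem_insert_of_mem h)⟩, hxz⟩
      · -- z ∉ I, z ∉ T : toggle fails, z stays out
        have hzA : z ∉ A := fun h => hzI (hzA.mp h)
        have hm : ∃ m, m ∈ I ∧ m < z ∧ m ∉ T := by
          rw [hT, mem_rowT] at hzT
          push_neg at hzT
          rcases hzT with ⟨m, hm, hmz⟩
          have hmI : m ∈ I := (mem_filter.mp hm).1
          refine ⟨m, hmI, lt_of_le_of_ne hmz (fun h => hzI (h ▸ hmI)), ?_⟩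
          intro hmem
          rw [hT, mem_rowT] at hmem
          exact hmem ⟨m, hm, le_rfl⟩
        rcases hm with ⟨m, hmI, hmz, hmT⟩
        have hmS : m ∈ S := hbelow m hmz
        have hmA : m ∉ A := by
          rw [hmemA]
          rintro (⟨h, _⟩ | ⟨_, h⟩)
          · exact hmT h
          · exact h hmS
        have hynot : IsOrderIdeal (symmDiff A {z}) → False := by
          intro hid
          have hzsd : z ∈ symmDiff A {z} := by rw [hsd]; exact Or.inr ⟨rfl, hzA⟩
          have := hid m z hmz.le hzsd
          rw [hsd] at this
          rcases this with ⟨h, _⟩ | ⟨h, _⟩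
          · exact hmA h
          · exact absurd (h ▸ hmz) (lt_irrefl z)
        rw [toggleIdeal, if_neg hynot]
        ext x
        rw [hmemA, hmemA']
        constructor
        · rintro (⟨h1', h2'⟩ | ⟨h1', h2'⟩)
          · exact Or.inl ⟨h1', mem_insert_of_mem h2'⟩
          · have hxz : x ≠ z := fun h => hzI (h ▸ h1')
            exact Or.inr ⟨h1', fun h => (mem_insert.mp h).elim hxz h2'⟩
        · rintro (⟨h1', h2'⟩ | ⟨h1', h2'⟩)
          · rcases mem_insert.mp h2' with rfl | h
            · exact absurd h1' hzT
            · exact Or.inl ⟨h1', h⟩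
          · exact Or.inr ⟨h1', fun h => h2' (mem_insert_of_mem h)⟩
    rw [List.foldl_cons]
    show List.foldl (fun A z => toggleIdeal z A) (toggleIdeal z A) t = T
    rw [hstep]
    exact ih (insert z S) hnd.of_cons hp.of_cons
      (fun w hw => by
        rw [mem_insert]
        rintro (rfl | h)
        · exact (List.nodup_cons.mp hnd).1 hw
        · exact h1 w (List.mem_cons_of_mem z hw) h)
      (fun y hy w hw => by
        rcases mem_insert.mp hy with rfl | h
        · exact List.rel_of_pairwise_cons hp hw
        · exact h3 y h w (List.mem_cons_of_mem z hw))
      (fun x => by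
        rcases h5 x with h | h
        · exact Or.inl (mem_insert_of_mem h)
        · rcases List.mem_cons.mp h with rfl | h
          · exact Or.inl (mem_insert_self _ _)
          · exact Or.inr h)

/-- Applying the toggles `τ_{x_1}, ..., τ_{x_n}` in the order given by a linear
extension `x_1, ..., x_n` of `P` to an order ideal `I` yields rowmotion
`Row(I) = P \ ∇(max(I))`. -/
theorem toggles_linearExtension_eq_rowmotion (l : List α) (hnd : l.Nodup)
    (hall : ∀ z : α, z ∈ l)
    (hlin : ∀ i j : Fin l.length, l.get i < l.get j → (i : ℕ) < (j : ℕ))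
    (I : Finset α) (hI : IsOrderIdeal I) :
    l.foldl (fun A z => toggleIdeal z A) I = univ \ upSet (maxSet I) := by
  have hp : List.Pairwise (fun a b => ¬ b < a) l := by
    rw [List.pairwise_iff_get]
    intro i j hij hlt
    exact absurd (hlin j i hlt) (Nat.not_lt.mpr (Nat.le_of_lt hij))
  have h0 : (univ \ upSet (maxSet I)) ∩ (∅ : Finset α) ∪ I \ (∅ : Finset α) = I := by
    simp
  have := key I hI l ∅ hnd hp (fun z _ => notMem_empty z)
    (fun y hy => absurd hy (notMem_empty y)) (fun x => Or.inr (hall x))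
  rwa [h0] at this
end

section
/- Let P be a finite set, K a collection of subsets of P, and let H^P|_K be the graph on vertex set K where A, A' are adjacent iff |A △ A'| = 1. Fix probabilities p_x ∈ (0,1) for each x ∈ P and an ordering x of P. The toggle Markov chain T(K, x) (whose transition from state A applies, in the fixed order, the random toggles that toggle x out of A with probability p_x, toggle x into A whenever possible, and otherwise leave A unchanged) is irreducible if and only if H^P|_K is connected. -/
set_option linter.unusedSectionVars false


open Finset

variable {α : Type*} [Fintype α] [DecidableEq α]

/-- The toggle `τ_z` on a collection `K` of subsets of `P`. -/
def toggle (K : Finset (Finset α)) (z : α) (A : Finset α) : Finset α :=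
  if symmDiff A {z} ∈ K then symmDiff A {z} else A

/-- Apply the toggles indexed by the list `l`, in order (leftmost first). -/
def toggleSeq (K : Finset (Finset α)) (l : List α) (A : Finset α) : Finset α :=
  l.foldl (fun B z => toggle K z B) A

namespace ToggleAux

variable {K : Finset (Finset α)}

lemma toggle_mem {z : α} {A : Finset α} (hA : A ∈ K) : toggle K z A ∈ K := by
  unfold toggle; split_ifs with h; exacts [h, hA]

lemma toggle_toggle {z : α} {A : Finset α} (hA : A ∈ K) :
    toggle K z (toggle K z A) = A := by
  by_cases h1 : symmDiff A {z} ∈ K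
  · have h2 : symmDiff (symmDiff A {z}) {z} = A := symmDiff_symmDiff_cancel_right _ _
    simp [toggle, h1, h2, hA]
  · simp [toggle, h1]

lemma toggleSeq_nil (A : Finset α) : toggleSeq K [] A = A := rfl

lemma toggleSeq_cons (z : α) (m : List α) (A : Finset α) :
    toggleSeq K (z :: m) A = toggleSeq K m (toggle K z A) := rfl

lemma toggleSeq_append (m₁ m₂ : List α) (A : Finset α) :
    toggleSeq K (m₁ ++ m₂) A = toggleSeq K m₂ (toggleSeq K m₁ A) :=
  List.foldl_append

lemma toggleSeq_mem {m : List α} {A : Finset α} (hA : A ∈ K) : toggleSeq K m A ∈ K := by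
  induction m generalizing A with
  | nil => exact hA
  | cons z m ih => exact ih (toggle_mem hA)

lemma mem_toggle_iff {u z : α} {A : Finset α} (h : u ≠ z) :
    u ∈ toggle K z A ↔ u ∈ A := by
  unfold toggle; split_ifs with h1
  · simp [Finset.mem_symmDiff, h]
  · rfl

lemma mem_toggleSeq_iff {u : α} {m : List α} {A : Finset α} (h : u ∉ m) :
    u ∈ toggleSeq K m A ↔ u ∈ A := by
  induction m generalizing A with
  | nil => rfl
  | cons z m ih =>
    rw [toggleSeq_cons, ih (fun hm => h (List.mem_cons.mpr (Or.inr hm))),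
      mem_toggle_iff (fun he => h (List.mem_cons.mpr (Or.inl he)))]

lemma toggleSeq_reverse {m : List α} {A : Finset α} (hA : A ∈ K) :
    toggleSeq K m.reverse (toggleSeq K m A) = A := by
  induction m generalizing A with
  | nil => rfl
  | cons z m ih =>
    rw [toggleSeq_cons, List.reverse_cons, toggleSeq_append, ih (toggle_mem hA)]
    simp only [toggleSeq]
    exact toggle_toggle hA

lemma toggleSeq_injOn {m : List α} {A B : Finset α} (hA : A ∈ K) (hB : B ∈ K)
    (h : toggleSeq K m A = toggleSeq K m B) : A = B := by
  have h1 := toggleSeq_reverse (m := m) hA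
  rw [h, toggleSeq_reverse hB] at h1
  exact h1.symm

/-- The one-step relation of the toggle Markov chain. -/
abbrev Rel (K : Finset (Finset α)) (l : List α) (A B : Finset α) : Prop :=
  A ∈ K ∧ B ∈ K ∧ ∃ U : Finset α, U ⊆ A ∧ toggleSeq K (l.filter (· ∉ U)) A = B

lemma rel_symm {l : List α} {A B : Finset α} (h : Rel K l A B) :
    Relation.ReflTransGen (Rel K l) B A := by
  obtain ⟨hA, hB, U, hU, hstep⟩ := h
  set m := l.filter (· ∉ U) with hm
  set g : Finset α → Finset α := toggleSeq K m with hg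
  have hUm : ∀ u ∈ U, u ∉ m := by
    intro u hu hum
    rw [hm, List.mem_filter] at hum
    have : u ∉ U := by simpa using hum.2
    exact this hu
  have key : ∀ C, C ∈ K → U ⊆ C → (g C ∈ K ∧ U ⊆ g C ∧ Rel K l C (g C)) := by
    intro C hC hUC
    refine ⟨toggleSeq_mem hC, ?_, hC, toggleSeq_mem hC, U, hUC, rfl⟩
    intro u hu
    exact (mem_toggleSeq_iff (hUm u hu)).mpr (hUC hu)
  have iter_inv : ∀ n, g^[n] A ∈ K ∧ U ⊆ g^[n] A := by
    intro n; induction n with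
    | zero => exact ⟨hA, hU⟩
    | succ n ih =>
      rw [Function.iterate_succ_apply']
      exact ⟨(key _ ih.1 ih.2).1, (key _ ih.1 ih.2).2.1⟩
  have iter_inj : ∀ (n : ℕ) (C D : Finset α), C ∈ K → D ∈ K → g^[n] C = g^[n] D → C = D := by
    intro n; induction n with
    | zero => intro C D _ _ h; exact h
    | succ n ih =>
      intro C D hC hD h
      rw [Function.iterate_succ_apply, Function.iterate_succ_apply] at h
      exact toggleSeq_injOn hC hD (ih _ _ (toggleSeq_mem hC) (toggleSeq_mem hD) h)
  have chain : ∀ t k, Relation.ReflTransGen (Rel K l) (g^[t] A) (g^[t + k] A) := by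
    intro t k; induction k with
    | zero => exact .refl
    | succ k ih =>
      refine ih.tail ?_
      rw [show t + (k + 1) = (t + k) + 1 from rfl, Function.iterate_succ_apply']
      exact (key _ (iter_inv (t + k)).1 (iter_inv (t + k)).2).2.2
  -- pigeonhole: some iterate returns to A
  obtain ⟨i, j, hne, hij⟩ := Finite.exists_ne_map_eq_of_infinite (fun n : ℕ => g^[n] A)
  wlog hlt : i < j generalizing i j
  · exact this j i hne.symm hij.symm (by omega)
  have hret : g^[j - i] A = A := by
    have h1 : g^[i] (g^[j - i] A) = g^[i] A := by
      rw [← Function.iterate_add_apply, show i + (j - i) = j by omega]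
      exact hij.symm
    exact iter_inj i _ _ (iter_inv (j - i)).1 hA h1
  have hBA : Relation.ReflTransGen (Rel K l) (g^[1] A) (g^[1 + (j - i - 1)] A) := chain 1 _
  rw [show 1 + (j - i - 1) = j - i by omega, hret] at hBA
  have hgA : g^[1] A = B := by
    rw [Function.iterate_one]; exact hstep
  rwa [hgA] at hBA

lemma filter_cons_mem {z : α} {l' : List α} {U : Finset α} (h : z ∈ U) :
    (z :: l').filter (· ∉ U) = l'.filter (· ∉ U) := by
  simp [List.filter_cons, h]

lemma filter_cons_not_mem {z : α} {l' : List α} {U : Finset α} (h : z ∉ U) :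
    (z :: l').filter (· ∉ U) = z :: l'.filter (· ∉ U) := by
  simp [List.filter_cons, h]

lemma filter_eq_self_of {l' : List α} {U : Finset α} (h : ∀ a ∈ l', a ∉ U) :
    l'.filter (· ∉ U) = l' :=
  List.filter_eq_self.mpr (by intro a ha; simpa using h a ha)

lemma filter_union_singleton {z : α} {l' : List α} {U : Finset α} (hz : z ∉ l') :
    l'.filter (· ∉ (U ∪ {z})) = l'.filter (· ∉ U) := by
  apply List.filter_congr
  intro a ha
  have hne : a ≠ z := fun he => hz (he ▸ ha)
  simp [Finset.mem_union, hne]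

lemma subset_symmDiff_singleton {z : α} {A : Finset α} (h : z ∉ A) :
    A ⊆ symmDiff A {z} := by
  intro u hu
  simp only [Finset.mem_symmDiff, Finset.mem_singleton]
  exact Or.inl ⟨hu, fun he => absurd (he ▸ hu) h⟩

lemma toggle_of_mem {z : α} {A B : Finset α} (hB : symmDiff A {z} = B) (hBK : B ∈ K) :
    toggle K z A = B := by
  rw [toggle, hB, if_pos hBK]

lemma head_trick {z : α} {l' : List α} (hz : z ∉ l') {A : Finset α} (hA : A ∈ K) :
    Relation.ReflTransGen (Rel K (z :: l')) A (toggle K z A) := by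
  by_cases hK : symmDiff A {z} ∈ K
  · have htog : toggle K z A = symmDiff A {z} := toggle_of_mem rfl hK
    set B := symmDiff A {z} with hBdef
    have hcancel : symmDiff B {z} = A := symmDiff_symmDiff_cancel_right _ _
    have hfil0 : ∀ C : List α, C.filter (· ∉ (∅ : Finset α)) = C := by
      intro C; exact filter_eq_self_of (by simp)
    have hfilz : (z :: l').filter (· ∉ ({z} : Finset α)) = l' := by
      rw [filter_cons_mem (Finset.mem_singleton_self z)]
      exact filter_eq_self_of (by intro a ha; simp; exact fun he => hz (he ▸ ha))
    rw [htog]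
    by_cases hzA : z ∈ A
    · -- removal case: A → C via U = {z}, B → C via U = ∅ where C = toggleSeq l' A
      have stepA : Rel K (z :: l') A (toggleSeq K l' A) :=
        ⟨hA, toggleSeq_mem hA, {z}, Finset.singleton_subset_iff.mpr hzA, by rw [hfilz]⟩
      have stepB : Rel K (z :: l') B (toggleSeq K l' A) := by
        refine ⟨hK, toggleSeq_mem hA, ∅, Finset.empty_subset _, ?_⟩
        rw [hfil0, toggleSeq_cons, toggle_of_mem hcancel hA]
      exact (Relation.ReflTransGen.single stepA).trans (rel_symm stepB)
    · -- addition case: A → C via U = ∅, B → C via U = {z} where C = toggleSeq l' B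
      have hzB : z ∈ B := by simp [hBdef, Finset.mem_symmDiff, hzA]
      have stepA : Rel K (z :: l') A (toggleSeq K l' B) := by
        refine ⟨hA, toggleSeq_mem hK, ∅, Finset.empty_subset _, ?_⟩
        rw [hfil0, toggleSeq_cons, htog]
      have stepB : Rel K (z :: l') B (toggleSeq K l' B) :=
        ⟨hK, toggleSeq_mem hK, {z}, Finset.singleton_subset_iff.mpr hzB, by rw [hfilz]⟩
      exact (Relation.ReflTransGen.single stepA).trans (rel_symm stepB)
  · have : toggle K z A = A := by simp [toggle, hK]
    rw [this]

lemma lift_step {z : α} {l' : List α} (hz : z ∉ l') {A B : Finset α}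
    (h : Rel K l' A B) : Relation.ReflTransGen (Rel K (z :: l')) A B := by
  obtain ⟨hA, hB, U, hUA, hstep⟩ := h
  by_cases hzA : z ∈ A
  · refine Relation.ReflTransGen.single ⟨hA, hB, U ∪ {z}, ?_, ?_⟩
    · exact Finset.union_subset hUA (Finset.singleton_subset_iff.mpr hzA)
    · rw [filter_cons_mem (by simp), filter_union_singleton hz, hstep]
  · have hzU : z ∉ U := fun hh => hzA (hUA hh)
    by_cases hK : symmDiff A {z} ∈ K
    · have htog : toggle K z A = symmDiff A {z} := toggle_of_mem rfl hK
      have htr := head_trick hz hA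
      rw [htog] at htr
      refine htr.tail ⟨hK, hB, U, hUA.trans (subset_symmDiff_singleton hzA), ?_⟩
      rw [filter_cons_not_mem hzU, toggleSeq_cons,
        toggle_of_mem (symmDiff_symmDiff_cancel_right _ _) hA, hstep]
    · refine Relation.ReflTransGen.single ⟨hA, hB, U, hUA, ?_⟩
      have : toggle K z A = A := by simp [toggle, hK]
      rw [filter_cons_not_mem hzU, toggleSeq_cons, this, hstep]

lemma rtg_lift {z : α} {l' : List α} (hz : z ∉ l') {A B : Finset α}
    (h : Relation.ReflTransGen (Rel K l') A B) :
    Relation.ReflTransGen (Rel K (z :: l')) A B := by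
  induction h with
  | refl => exact .refl
  | tail _ hstep ih => exact ih.trans (lift_step hz hstep)

lemma toggle_reachable : ∀ (l : List α), l.Nodup → ∀ z ∈ l, ∀ A ∈ K,
    Relation.ReflTransGen (Rel K l) A (toggle K z A) := by
  intro l
  induction l with
  | nil => intro _ z hzl; exact absurd hzl List.not_mem_nil
  | cons w l' ih =>
    intro hnd z hzl A hA
    have hw : w ∉ l' := (List.nodup_cons.mp hnd).1
    rcases List.mem_cons.mp hzl with he | hzl'
    · exact he ▸ head_trick hw hA
    · exact rtg_lift hw (ih (List.nodup_cons.mp hnd).2 z hzl' A hA)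

lemma toggleSeq_edges (m : List α) {A : Finset α} (hA : A ∈ K) :
    Relation.ReflTransGen
      (fun B B' : Finset α => B ∈ K ∧ B' ∈ K ∧ (symmDiff B B').card = 1)
      A (toggleSeq K m A) := by
  induction m generalizing A with
  | nil => exact .refl
  | cons z m ih =>
    rw [toggleSeq_cons]
    refine Relation.ReflTransGen.trans ?_ (ih (toggle_mem hA))
    by_cases hK : symmDiff A {z} ∈ K
    · have htog : toggle K z A = symmDiff A {z} := toggle_of_mem rfl hK
      refine Relation.ReflTransGen.single ⟨hA, toggle_mem hA, ?_⟩
      rw [htog, symmDiff_symmDiff_cancel_left, Finset.card_singleton]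
    · have : toggle K z A = A := by simp [toggle, hK]
      rw [this]

lemma rtg_mono_rtg {r s : Finset α → Finset α → Prop}
    (h : ∀ x y, r x y → Relation.ReflTransGen s x y) {A B : Finset α}
    (hr : Relation.ReflTransGen r A B) : Relation.ReflTransGen s A B := by
  induction hr with
  | refl => exact .refl
  | tail _ hstep ih => exact ih.trans (h _ _ hstep)

end ToggleAux

/-- The transition probability of the toggle Markov chain `T(K, x)` from `A` to `A'`:
a subset `U ⊆ A` of skipped elements is chosen, each `u ∈ A` being skipped
independently with probability `1 - p u`, and the chain moves to the state obtained
from `A` by applying the toggles `τ_z` for `z ∉ U` in the order given by the list `l`. -/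
noncomputable def transProb (K : Finset (Finset α)) (l : List α) (p : α → ℝ)
    (A A' : Finset α) : ℝ :=
  ∑ U ∈ A.powerset,
    if toggleSeq K (l.filter (· ∉ U)) A = A' then
      (∏ u ∈ U, (1 - p u)) * ∏ z ∈ A \ U, p z
    else 0

namespace ToggleAux

lemma transProb_pos_iff {K : Finset (Finset α)} {l : List α} {p : α → ℝ}
    (hp : ∀ z : α, 0 < p z ∧ p z < 1) {A B : Finset α} :
    0 < transProb K l p A B ↔
      ∃ U : Finset α, U ⊆ A ∧ toggleSeq K (l.filter (· ∉ U)) A = B := by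
  constructor
  · intro h
    by_contra hc
    push_neg at hc
    have hz : transProb K l p A B = 0 := by
      apply Finset.sum_eq_zero
      intro U hU
      rw [if_neg (hc U (Finset.mem_powerset.mp hU))]
    rw [hz] at h
    exact lt_irrefl 0 h
  · rintro ⟨U, hUA, hstep⟩
    apply Finset.sum_pos'
    · intro V _
      split_ifs
      · exact mul_nonneg
          (Finset.prod_nonneg fun u _ => by linarith [(hp u).2])
          (Finset.prod_nonneg fun w _ => (hp w).1.le)
      · exact le_refl 0
    · refine ⟨U, Finset.mem_powerset.mpr hUA, ?_⟩
      rw [if_pos hstep]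
      exact mul_pos
        (Finset.prod_pos fun u _ => by linarith [(hp u).2])
        (Finset.prod_pos fun w _ => (hp w).1)

end ToggleAux

/-- The toggle Markov chain `T(K, x)` (with all probabilities strictly between `0` and
`1`) is irreducible if and only if the induced subgraph `H^P|_K` of the hypercube graph
on `K` (where `A, A'` are adjacent iff `|A △ A'| = 1`) is connected. -/
theorem toggleMarkovChain_irreducible_iff_hypercube_connected
    (K : Finset (Finset α)) (l : List α) (hnd : l.Nodup) (hall : ∀ z : α, z ∈ l)
    (p : α → ℝ) (hp : ∀ z : α, 0 < p z ∧ p z < 1) :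
    (∀ A ∈ K, ∀ A' ∈ K, Relation.ReflTransGen
        (fun B B' : Finset α => B ∈ K ∧ B' ∈ K ∧ 0 < transProb K l p B B') A A') ↔
    (∀ A ∈ K, ∀ A' ∈ K, Relation.ReflTransGen
        (fun B B' : Finset α => B ∈ K ∧ B' ∈ K ∧ (symmDiff B B').card = 1) A A') := by
  constructor
  · intro H A hA A' hA'
    refine ToggleAux.rtg_mono_rtg ?_ (H A hA A' hA')
    rintro B B' ⟨hB, hB', hpos⟩
    obtain ⟨U, hUB, hstep⟩ := (ToggleAux.transProb_pos_iff hp).mp hpos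
    exact hstep ▸ ToggleAux.toggleSeq_edges _ hB
  · intro H A hA A' hA'
    refine ToggleAux.rtg_mono_rtg ?_ (H A hA A' hA')
    rintro B B' ⟨hB, hB', hcard⟩
    obtain ⟨t, ht⟩ := Finset.card_eq_one.mp hcard
    have hB'eq : symmDiff B {t} = B' := by
      have h1 := symmDiff_symmDiff_cancel_left B B'
      rw [ht] at h1
      exact h1
    have htog : toggle K t B = B' := ToggleAux.toggle_of_mem hB'eq hB'
    have hreach := ToggleAux.toggle_reachable l hnd t (hall t) B hB
    rw [htog] at hreach
    refine ToggleAux.rtg_mono_rtg ?_ hreach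
    rintro X Y ⟨hX, hY, U, hUX, hst⟩
    exact Relation.ReflTransGen.single
      ⟨hX, hY, (ToggleAux.transProb_pos_iff hp).mpr ⟨U, hUX, hst⟩⟩
end

section
/- Let P be a finite set, K a collection of subsets of P with toggle Markov chain T(K, x) irreducible, and fix probabilities p_x > 0 for each x ∈ P. Then the stationary distribution of T(K, x) assigns to each A ∈ K the probability (1/Z) ∏_{x ∈ A} p_x^{-1}, where Z = Σ_{A' ∈ K} ∏_{x' ∈ A'} p_{x'}^{-1}. -/
open Finset

variable {α : Type*} [Fintype α] [DecidableEq α]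

lemma toggle_mem {K : Finset (Finset α)} {A : Finset α} (hA : A ∈ K) (z : α) :
    toggle K z A ∈ K := by
  unfold toggle; split
  · assumption
  · exact hA

lemma toggle_toggle {K : Finset (Finset α)} {A : Finset α} (hA : A ∈ K) (z : α) :
    toggle K z (toggle K z A) = A := by
  unfold toggle
  by_cases h : symmDiff A {z} ∈ K
  · simp [h, symmDiff_symmDiff_cancel_right, hA]
  · simp [h]

lemma toggle_mem_iff {K : Finset (Finset α)} {A : Finset α} {w z : α} (hw : w ≠ z) :
    w ∈ toggle K z A ↔ w ∈ A := by
  unfold toggle; split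
  · simp [Finset.mem_symmDiff, hw]
  · rfl

lemma toggleSeq_cons {K : Finset (Finset α)} {A : Finset α} (a : α) (l : List α) :
    toggleSeq K (a :: l) A = toggleSeq K l (toggle K a A) := rfl

lemma toggleSeq_append {K : Finset (Finset α)} {A : Finset α} (l₁ l₂ : List α) :
    toggleSeq K (l₁ ++ l₂) A = toggleSeq K l₂ (toggleSeq K l₁ A) :=
  List.foldl_append

lemma toggleSeq_mem {K : Finset (Finset α)} {A : Finset α} (hA : A ∈ K) (l : List α) :
    toggleSeq K l A ∈ K := by
  induction l generalizing A with
  | nil => exact hA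
  | cons a l ih => exact ih (toggle_mem hA a)

lemma toggleSeq_reverse {K : Finset (Finset α)} {A : Finset α} (hA : A ∈ K) (l : List α) :
    toggleSeq K l.reverse (toggleSeq K l A) = A := by
  induction l generalizing A with
  | nil => rfl
  | cons a l ih =>
    rw [toggleSeq_cons, List.reverse_cons, toggleSeq_append, ih (toggle_mem hA a)]
    exact toggle_toggle hA a

lemma toggleSeq_reverse' {K : Finset (Finset α)} {A : Finset α} (hA : A ∈ K) (l : List α) :
    toggleSeq K l (toggleSeq K l.reverse A) = A := by
  have := toggleSeq_reverse hA l.reverse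
  rwa [List.reverse_reverse] at this

lemma toggleSeq_mem_iff {K : Finset (Finset α)} {A : Finset α} {w : α} {l : List α}
    (hw : w ∉ l) : w ∈ toggleSeq K l A ↔ w ∈ A := by
  induction l generalizing A with
  | nil => rfl
  | cons a l ih =>
    rw [toggleSeq_cons, ih (fun h => hw (List.mem_cons_of_mem _ h)),
      toggle_mem_iff (by rintro rfl; exact hw (List.mem_cons_self))]

lemma weight_eq {p : α → ℝ} (hp : ∀ z : α, p z ≠ 0) {U A' : Finset α} (hU : U ⊆ A') :
    (∏ z ∈ A', (p z)⁻¹) * ((∏ u ∈ U, (1 - p u)) * ∏ z ∈ A' \ U, p z)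
      = ∏ u ∈ U, (1 - p u) * (p u)⁻¹ := by
  rw [← Finset.prod_sdiff hU (f := fun z => (p z)⁻¹), Finset.prod_mul_distrib]
  have h1 : (∏ z ∈ A' \ U, (p z)⁻¹) * (∏ z ∈ A' \ U, p z) = 1 := by
    rw [← Finset.prod_mul_distrib]
    exact Finset.prod_eq_one fun z _ => inv_mul_cancel₀ (hp z)
  linear_combination (∏ u ∈ U, (1 - p u)) * (∏ u ∈ U, (p u)⁻¹) * h1

/-- The stationary distribution of an irreducible toggle Markov chain `T(K, x)` with
probabilities `p z > 0` assigns to each `A ∈ K` the probability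
`(1/Z) ∏_{z ∈ A} (p z)⁻¹`, where `Z = Σ_{A' ∈ K} ∏_{z' ∈ A'} (p z')⁻¹`. -/
theorem toggleMarkovChain_stationary
    (K : Finset (Finset α)) (l : List α) (hnd : l.Nodup) (hall : ∀ z : α, z ∈ l)
    (p : α → ℝ) (hp : ∀ z : α, 0 < p z ∧ p z ≤ 1)
    (hirr : ∀ A ∈ K, ∀ A' ∈ K, Relation.ReflTransGen
        (fun B B' : Finset α => B ∈ K ∧ B' ∈ K ∧ 0 < transProb K l p B B') A A') :
    ∀ A ∈ K,
      ∑ A' ∈ K, ((1 / ∑ B ∈ K, ∏ z ∈ B, (p z)⁻¹) * ∏ z ∈ A', (p z)⁻¹)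
          * transProb K l p A' A
        = (1 / ∑ B ∈ K, ∏ z ∈ B, (p z)⁻¹) * ∏ z ∈ A, (p z)⁻¹ := by
  intro A hA
  have hp0 : ∀ z : α, p z ≠ 0 := fun z => (hp z).1.ne'
  set c : ℝ := 1 / ∑ B ∈ K, ∏ z ∈ B, (p z)⁻¹ with hc
  -- reduce to the unnormalized identity
  have key : ∑ A' ∈ K, (∏ z ∈ A', (p z)⁻¹) * transProb K l p A' A
      = ∏ z ∈ A, (p z)⁻¹ := by
    -- rewrite each summand as a sum over U ⊆ univ
    have step1 : ∀ A' ∈ K, (∏ z ∈ A', (p z)⁻¹) * transProb K l p A' A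
        = ∑ U ∈ (univ : Finset α).powerset,
            (if U ⊆ A' then
              (if toggleSeq K (l.filter (· ∉ U)) A' = A then
                ∏ u ∈ U, (1 - p u) * (p u)⁻¹ else 0) else 0) := by
      intro A' _
      have hps : (univ : Finset α).powerset.filter (· ⊆ A') = A'.powerset := by
        ext U; simp [Finset.mem_powerset]
      rw [← Finset.sum_filter, hps, transProb, Finset.mul_sum]
      refine Finset.sum_congr rfl fun U hU => ?_
      rw [Finset.mem_powerset] at hU
      rw [mul_ite, mul_zero, weight_eq hp0 hU]
    rw [Finset.sum_congr rfl step1, Finset.sum_comm]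
    -- for each U, the inner sum collapses
    have step2 : ∀ U ∈ (univ : Finset α).powerset,
        (∑ A' ∈ K, if U ⊆ A' then
          (if toggleSeq K (l.filter (· ∉ U)) A' = A then
            ∏ u ∈ U, (1 - p u) * (p u)⁻¹ else 0) else 0)
        = if U ⊆ A then ∏ u ∈ U, (1 - p u) * (p u)⁻¹ else 0 := by
      intro U _
      set l' : List α := l.filter (· ∉ U) with hl'
      have hUl' : ∀ u ∈ U, u ∉ l' := by
        intro u hu hmem
        rw [hl', List.mem_filter] at hmem
        have h2 := hmem.2
        simp only [decide_eq_true_eq] at h2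
        exact h2 hu
      by_cases hUA : U ⊆ A
      · set B : Finset α := toggleSeq K l'.reverse A with hB
        have hBK : B ∈ K := toggleSeq_mem hA _
        have hFB : toggleSeq K l' B = A := toggleSeq_reverse' hA l'
        have hUB : U ⊆ B := by
          intro u hu
          rw [hB, toggleSeq_mem_iff (by
            intro h; exact hUl' u hu (List.mem_reverse.mp h))]
          exact hUA hu
        rw [if_pos hUA]
        refine (Finset.sum_eq_single_of_mem B hBK fun B' hB'K hne => ?_).trans ?_
        · by_cases h1 : U ⊆ B'
          · rw [if_pos h1]
            by_cases h2 : toggleSeq K l' B' = A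
            · exfalso
              apply hne
              have := congrArg (toggleSeq K l'.reverse) h2
              rwa [toggleSeq_reverse hB'K] at this
            · rw [if_neg h2]
          · rw [if_neg h1]
        · rw [if_pos hUB, if_pos hFB]
      · rw [if_neg hUA]
        refine Finset.sum_eq_zero fun A' hA' => ?_
        by_cases h1 : U ⊆ A'
        · rw [if_pos h1]
          by_cases h2 : toggleSeq K l' A' = A
          · exfalso
            apply hUA
            intro u hu
            rw [← h2, toggleSeq_mem_iff (hUl' u hu)]
            exact h1 hu
          · rw [if_neg h2]
        · rw [if_neg h1]
    rw [Finset.sum_congr rfl step2]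
    have hps : (univ : Finset α).powerset.filter (· ⊆ A) = A.powerset := by
      ext U; simp [Finset.mem_powerset]
    rw [← Finset.sum_filter, hps]
    have := Finset.prod_add (fun z => (1 - p z) * (p z)⁻¹) (fun _ => (1 : ℝ)) A
    simp only [Finset.prod_const_one, mul_one] at this
    rw [← this]
    refine Finset.prod_congr rfl fun z _ => ?_
    rw [sub_mul, one_mul, mul_inv_cancel₀ (hp0 z)]
    ring
  calc ∑ A' ∈ K, (c * ∏ z ∈ A', (p z)⁻¹) * transProb K l p A' A
      = c * ∑ A' ∈ K, (∏ z ∈ A', (p z)⁻¹) * transProb K l p A' A := by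
        rw [Finset.mul_sum]; exact Finset.sum_congr rfl fun A' _ => by ring
    _ = c * ∏ z ∈ A, (p z)⁻¹ := by rw [key]
end

section
/- Let P be a finite poset and fix probabilities p_x ∈ (0,1) for x ∈ P. The rowmotion Markov chain on J(P), with transition probability from I to I' equal to (∏_{x ∈ min(P\I')} p_x)(∏_{x' ∈ max(I)\min(P\I')} (1 - p_{x'})) if min(P \ I') ⊆ max(I), and 0 otherwise, has stationary distribution π(I) = (1/Z) ∏_{x ∈ I} p_x^{-1}, where Z = Σ_{I' ∈ J(P)} ∏_{x' ∈ I'} p_{x'}^{-1}. -/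
open Finset

variable {α : Type*} [Fintype α] [DecidableEq α] [PartialOrder α]
  [DecidableRel ((· ≤ ·) : α → α → Prop)]

/-- The set of minimal elements of `T`. -/
def minSet (T : Finset α) : Finset α := T.filter fun x => ∀ y ∈ T, y ≤ x → y = x

/-- The transition probability of the rowmotion Markov chain `M_{J(P)}` from `I` to
`I'`. -/
noncomputable def rowTrans (p : α → ℝ) (I I' : Finset α) : ℝ :=
  if minSet (univ \ I') ⊆ maxSet I then
    (∏ x ∈ minSet (univ \ I'), p x) *
      ∏ x ∈ maxSet I \ minSet (univ \ I'), (1 - p x)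
  else 0

-- auxiliary lemmas

lemma maxSet_subset {I : Finset α} : maxSet I ⊆ I := Finset.filter_subset _ _

lemma mem_maxSet' {I : Finset α} {x : α} :
    x ∈ maxSet I ↔ x ∈ I ∧ ∀ y ∈ I, x ≤ y → y = x := by simp [maxSet]

lemma mem_minSet' {T : Finset α} {x : α} :
    x ∈ minSet T ↔ x ∈ T ∧ ∀ y ∈ T, y ≤ x → y = x := by simp [minSet]

lemma exists_minSet_le (T : Finset α) : ∀ x ∈ T, ∃ s ∈ minSet T, s ≤ x := by
  intro x
  induction x using WellFoundedLT.induction with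
  | _ x ih =>
    intro hx
    by_cases h : ∀ y ∈ T, y ≤ x → y = x
    · exact ⟨x, mem_minSet'.2 ⟨hx, h⟩, le_refl x⟩
    · push_neg at h
      obtain ⟨y, hyT, hyx, hne⟩ := h
      obtain ⟨s, hs, hsy⟩ := ih y (lt_of_le_of_ne hyx hne) hyT
      exact ⟨s, hs, le_trans hsy hyx⟩

open scoped Classical in
/-- the "addable" elements relative to `L` (and to `S = minSet (univ \ I')`). -/
noncomputable def Bset (I' L : Finset α) : Finset α :=
  univ.filter fun x => x ∉ L ∧ (∀ y, y < x → y ∈ L) ∧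
    ∀ s ∈ minSet (univ \ I'), ¬ s ≤ x

lemma mem_Bset {I' L : Finset α} {x : α} :
    x ∈ Bset I' L ↔ x ∉ L ∧ (∀ y, y < x → y ∈ L) ∧
      ∀ s ∈ minSet (univ \ I'), ¬ s ≤ x := by
  classical simp [Bset]

lemma sum_neg_one_pow (s : Finset α) :
    ∑ T ∈ s.powerset, (-1 : ℝ) ^ T.card = if s = ∅ then 1 else 0 := by
  have h := Finset.prod_add (fun _ => (-1 : ℝ)) (fun _ => 1) s
  simp only [neg_add_cancel, prod_const, prod_const_one, one_pow, mul_one] at h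
  rw [← h]
  rcases eq_or_ne s ∅ with rfl | hs
  · simp
  · rw [if_neg hs, zero_pow]
    simpa [Finset.card_eq_zero] using hs

section Core

variable {I' : Finset α}

lemma S_not_mem {s : α} (hs : s ∈ minSet (univ \ I')) : s ∉ I' := by
  rw [mem_minSet'] at hs
  simpa using hs.1

lemma S_not_le (hI' : IsOrderIdeal I') {s x : α}
    (hs : s ∈ minSet (univ \ I')) (hx : x ∈ I') : ¬ s ≤ x :=
  fun h => S_not_mem hs (hI' s x h hx)

lemma not_mem_exists_S {x : α} (hx : x ∉ I') :
    ∃ s ∈ minSet (univ \ I'), s ≤ x :=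
  exists_minSet_le _ x (by simpa using hx)

end Core

theorem core_identity (p : α → ℝ) (hp : ∀ x : α, 0 < p x ∧ p x < 1)
    (I' : Finset α) (hI' : IsOrderIdeal I') :
    ∑ I ∈ univ.filter (fun I : Finset α => IsOrderIdeal I),
      (∏ x ∈ I, (p x)⁻¹) * rowTrans p I I' = ∏ x ∈ I', (p x)⁻¹ := by
  classical
  set S : Finset α := minSet (univ \ I') with hS
  have hpne : ∀ x : α, p x ≠ 0 := fun x => ne_of_gt (hp x).1
  -- Step A : restrict the sum
  have stepA : ∑ I ∈ univ.filter (fun I : Finset α => IsOrderIdeal I),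
      (∏ x ∈ I, (p x)⁻¹) * rowTrans p I I'
      = ∑ I ∈ univ.filter (fun I : Finset α => IsOrderIdeal I ∧ S ⊆ maxSet I),
        (∏ x ∈ I, (p x)⁻¹) *
          ((∏ x ∈ S, p x) * ∏ x ∈ maxSet I \ S, (1 - p x)) := by
    rw [← Finset.filter_filter, Finset.sum_filter (fun I : Finset α => S ⊆ maxSet I)]
    refine Finset.sum_congr rfl fun I _ => ?_
    rw [rowTrans]
    split <;> simp [hS]
  rw [stepA]
  -- Step B: expand the product over maxSet I \ S
  have stepB : ∀ I : Finset α, IsOrderIdeal I → S ⊆ maxSet I →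
      (∏ x ∈ I, (p x)⁻¹) * ((∏ x ∈ S, p x) * ∏ x ∈ maxSet I \ S, (1 - p x))
      = ∑ T ∈ (maxSet I \ S).powerset,
          (∏ x ∈ I \ T, (p x)⁻¹) * ((-1 : ℝ) ^ T.card * ∏ x ∈ S, p x) := by
    intro I hIdeal hSI
    have expand : ∏ x ∈ maxSet I \ S, (1 - p x)
        = ∑ T ∈ (maxSet I \ S).powerset, (-1 : ℝ) ^ T.card * ∏ x ∈ T, p x := by
      have h := Finset.prod_add (fun x => -p x) (fun _ => (1 : ℝ)) (maxSet I \ S)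
      simp only [neg_add_eq_sub, prod_const_one, mul_one] at h
      rw [h]
      refine Finset.sum_congr rfl fun T _ => ?_
      rw [Finset.prod_congr rfl (fun x _ => (neg_eq_neg_one_mul (p x))),
        Finset.prod_mul_distrib, Finset.prod_const]
    rw [expand, Finset.mul_sum, Finset.mul_sum]
    refine Finset.sum_congr rfl fun T hT => ?_
    have hTI : T ⊆ I := by
      intro x hx
      exact (mem_maxSet'.1 (Finset.mem_sdiff.1 (Finset.mem_powerset.1 hT hx)).1).1
    have key : (∏ x ∈ I, (p x)⁻¹) * ∏ x ∈ T, p x = ∏ x ∈ I \ T, (p x)⁻¹ := by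
      rw [← Finset.prod_sdiff hTI, mul_assoc, ← Finset.prod_mul_distrib]
      simp [inv_mul_cancel₀, hpne]
    calc (∏ x ∈ I, (p x)⁻¹) * ((∏ x ∈ S, p x) * ((-1:ℝ)^T.card * ∏ x ∈ T, p x))
        = ((∏ x ∈ I, (p x)⁻¹) * ∏ x ∈ T, p x) * ((-1:ℝ)^T.card * ∏ x ∈ S, p x) := by ring
      _ = (∏ x ∈ I \ T, (p x)⁻¹) * ((-1:ℝ)^T.card * ∏ x ∈ S, p x) := by rw [key]
  rw [Finset.sum_congr rfl (fun I hI => by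
    obtain ⟨_, h1, h2⟩ := Finset.mem_filter.1 hI
    exact stepB I h1 h2)]
  -- the two index sets for the bijection
  set idx : Finset (Finset α) :=
    univ.filter (fun L : Finset α => IsOrderIdeal L ∧ S ⊆ maxSet L) with hidx
  -- forward direction facts
  have fwd : ∀ I T : Finset α, IsOrderIdeal I → S ⊆ maxSet I → T ⊆ maxSet I \ S →
      IsOrderIdeal (I \ T) ∧ S ⊆ maxSet (I \ T) ∧ T ⊆ Bset I' (I \ T) := by
    intro I T hI hSI hT
    have hTmax : ∀ x ∈ T, x ∈ maxSet I := fun x hx => (Finset.mem_sdiff.1 (hT hx)).1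
    have hTS : ∀ x ∈ T, x ∉ S := fun x hx => (Finset.mem_sdiff.1 (hT hx)).2
    refine ⟨?_, ?_, ?_⟩
    · intro x y hxy hy
      rw [Finset.mem_sdiff] at hy ⊢
      refine ⟨hI x y hxy hy.1, fun hxT => ?_⟩
      have := (mem_maxSet'.1 (hTmax x hxT)).2 y hy.1 hxy
      exact hy.2 (this ▸ hxT)
    · intro s hs
      have hsmax := mem_maxSet'.1 (hSI hs)
      rw [mem_maxSet']
      refine ⟨Finset.mem_sdiff.2 ⟨hsmax.1, fun hsT => hTS s hsT hs⟩,
        fun y hy hsy => hsmax.2 y (Finset.mem_sdiff.1 hy).1 hsy⟩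
    · intro x hx
      have hxmax := mem_maxSet'.1 (hTmax x hx)
      rw [mem_Bset]
      refine ⟨fun h => (Finset.mem_sdiff.1 h).2 hx, fun y hy => ?_, fun s hs hsx => ?_⟩
      · refine Finset.mem_sdiff.2 ⟨hI y x hy.le hxmax.1, fun hyT => ?_⟩
        exact absurd ((mem_maxSet'.1 (hTmax y hyT)).2 x hxmax.1 hy.le) hy.ne'
      · exact hTS x hx (((mem_maxSet'.1 (hSI hs)).2 x hxmax.1 hsx) ▸ hs)
  -- backward direction facts
  have bwd : ∀ L T : Finset α, IsOrderIdeal L → S ⊆ maxSet L → T ⊆ Bset I' L →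
      IsOrderIdeal (L ∪ T) ∧ S ⊆ maxSet (L ∪ T) ∧ T ⊆ maxSet (L ∪ T) \ S ∧
        Disjoint L T := by
    intro L T hL hSL hT
    have hTB : ∀ x ∈ T, x ∉ L ∧ (∀ y, y < x → y ∈ L) ∧ ∀ s ∈ S, ¬ s ≤ x :=
      fun x hx => mem_Bset.1 (hT hx)
    have hdisj : Disjoint L T :=
      Finset.disjoint_right.2 fun x hx => (hTB x hx).1
    refine ⟨?_, ?_, ?_, hdisj⟩
    · intro x y hxy hy
      rcases Finset.mem_union.1 hy with hy | hy
      · exact Finset.mem_union_left _ (hL x y hxy hy)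
      · rcases eq_or_lt_of_le hxy with rfl | hlt
        · exact Finset.mem_union_right _ hy
        · exact Finset.mem_union_left _ ((hTB y hy).2.1 x hlt)
    · intro s hs
      have hsmax := mem_maxSet'.1 (hSL hs)
      rw [mem_maxSet']
      refine ⟨Finset.mem_union_left _ hsmax.1, fun y hy hsy => ?_⟩
      rcases Finset.mem_union.1 hy with hy | hy
      · exact hsmax.2 y hy hsy
      · exact absurd hsy ((hTB y hy).2.2 s hs)
    · intro x hx
      have hxB := hTB x hx
      rw [Finset.mem_sdiff, mem_maxSet']
      refine ⟨⟨Finset.mem_union_right _ hx, fun y hy hxy => ?_⟩,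
        fun hxS => hxB.1 (maxSet_subset (hSL hxS))⟩
      rcases eq_or_lt_of_le hxy with rfl | hlt
      · rfl
      · exfalso
        rcases Finset.mem_union.1 hy with hy | hy
        · exact hxB.1 (hL x y hlt.le hy)
        · exact hxB.1 ((hTB y hy).2.1 x hlt)
  -- Step C : the bijection
  have stepC :
      ∑ I ∈ idx, ∑ T ∈ (maxSet I \ S).powerset,
          (∏ x ∈ I \ T, (p x)⁻¹) * ((-1 : ℝ) ^ T.card * ∏ x ∈ S, p x)
      = ∑ L ∈ idx, ∑ T ∈ (Bset I' L).powerset,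
          (∏ x ∈ L, (p x)⁻¹) * ((-1 : ℝ) ^ T.card * ∏ x ∈ S, p x) := by
    rw [Finset.sum_sigma' idx (fun I => (maxSet I \ S).powerset)
        (fun I T => (∏ x ∈ I \ T, (p x)⁻¹) * ((-1 : ℝ) ^ T.card * ∏ x ∈ S, p x)),
      Finset.sum_sigma' idx (fun L => (Bset I' L).powerset)
        (fun L T => (∏ x ∈ L, (p x)⁻¹) * ((-1 : ℝ) ^ T.card * ∏ x ∈ S, p x))]
    refine Finset.sum_bij' (fun a _ => ⟨a.1 \ a.2, a.2⟩) (fun a _ => ⟨a.1 ∪ a.2, a.2⟩)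
      ?_ ?_ ?_ ?_ ?_
    · rintro ⟨I, T⟩ ha
      simp only [hidx, Finset.mem_sigma, Finset.mem_filter, Finset.mem_powerset] at ha
      obtain ⟨⟨-, hI, hSI⟩, hT⟩ := ha
      obtain ⟨h1, h2, h3⟩ := fwd I T hI hSI hT
      simp only [hidx, Finset.mem_sigma, Finset.mem_filter, Finset.mem_powerset]
      exact ⟨⟨Finset.mem_univ _, h1, h2⟩, h3⟩
    · rintro ⟨L, T⟩ ha
      simp only [hidx, Finset.mem_sigma, Finset.mem_filter, Finset.mem_powerset] at ha
      obtain ⟨⟨-, hL, hSL⟩, hT⟩ := ha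
      obtain ⟨h1, h2, h3, -⟩ := bwd L T hL hSL hT
      simp only [hidx, Finset.mem_sigma, Finset.mem_filter, Finset.mem_powerset]
      exact ⟨⟨Finset.mem_univ _, h1, h2⟩, h3⟩
    · rintro ⟨I, T⟩ ha
      simp only [hidx, Finset.mem_sigma, Finset.mem_filter, Finset.mem_powerset] at ha
      obtain ⟨-, hT⟩ := ha
      have hTI : T ⊆ I := fun x hx =>
        maxSet_subset (Finset.mem_sdiff.1 (hT hx)).1
      exact Sigma.ext (Finset.sdiff_union_of_subset hTI) (HEq.refl _)
    · rintro ⟨L, T⟩ ha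
      simp only [hidx, Finset.mem_sigma, Finset.mem_filter, Finset.mem_powerset] at ha
      obtain ⟨⟨-, hL, hSL⟩, hT⟩ := ha
      obtain ⟨-, -, -, hdisj⟩ := bwd L T hL hSL hT
      exact Sigma.ext (Finset.union_sdiff_cancel_right hdisj) (HEq.refl _)
    · rintro ⟨I, T⟩ ha
      rfl
  rw [stepC]
  -- Step D : collapse the inner alternating sums
  have stepD : ∀ L : Finset α,
      (∑ T ∈ (Bset I' L).powerset,
        (∏ x ∈ L, (p x)⁻¹) * ((-1 : ℝ) ^ T.card * ∏ x ∈ S, p x))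
      = if Bset I' L = ∅ then (∏ x ∈ L, (p x)⁻¹) * ∏ x ∈ S, p x else 0 := by
    intro L
    have h := sum_neg_one_pow (Bset I' L)
    calc ∑ T ∈ (Bset I' L).powerset,
          (∏ x ∈ L, (p x)⁻¹) * ((-1 : ℝ) ^ T.card * ∏ x ∈ S, p x)
        = (∑ T ∈ (Bset I' L).powerset, (-1 : ℝ) ^ T.card) *
            ((∏ x ∈ L, (p x)⁻¹) * ∏ x ∈ S, p x) := by
          rw [Finset.sum_mul]; exact Finset.sum_congr rfl fun T _ => by ring
      _ = _ := by rw [h]; split <;> ring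
  rw [Finset.sum_congr rfl fun L _ => stepD L]
  -- Step E : only L = I' ∪ S survives
  have hSdisj : Disjoint I' S := by
    rw [Finset.disjoint_right]
    exact fun s hs => S_not_mem hs
  have hfilter : idx.filter (fun L => Bset I' L = ∅) = {I' ∪ S} := by
    ext L
    rw [Finset.mem_filter, hidx, Finset.mem_filter, Finset.mem_singleton]
    constructor
    · rintro ⟨⟨-, hL, hSL⟩, hB⟩
      have hSsubL : S ⊆ L := fun s hs => maxSet_subset (hSL hs)
      have hLsub : L ⊆ I' ∪ S := by
        intro x hx
        by_cases hxI : x ∈ I'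
        · exact Finset.mem_union_left _ hxI
        · obtain ⟨s, hs, hsx⟩ := not_mem_exists_S hxI
          have := (mem_maxSet'.1 (hSL hs)).2 x hx hsx
          exact Finset.mem_union_right _ (this ▸ hs)
      have hI'sub : I' ⊆ L := by
        intro x hx
        by_contra hxL
        have hxIL : x ∈ I' \ L := Finset.mem_sdiff.2 ⟨hx, hxL⟩
        obtain ⟨m, hm, -⟩ := exists_minSet_le (I' \ L) x hxIL
        have hmIL := (mem_minSet'.1 hm).1
        have hmI := (Finset.mem_sdiff.1 hmIL).1
        have hmem : m ∈ Bset I' L := by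
          rw [mem_Bset]
          refine ⟨(Finset.mem_sdiff.1 hmIL).2, fun y hy => ?_, fun s hs => S_not_le hI' hs hmI⟩
          by_contra hyL
          have hyI : y ∈ I' := hI' y m hy.le hmI
          have := (mem_minSet'.1 hm).2 y (Finset.mem_sdiff.2 ⟨hyI, hyL⟩) hy.le
          exact hy.ne this
        rw [hB] at hmem
        exact absurd hmem (Finset.notMem_empty m)
      exact Finset.Subset.antisymm hLsub (Finset.union_subset hI'sub hSsubL)
    · rintro rfl
      refine ⟨⟨Finset.mem_univ _, ?_, ?_⟩, ?_⟩
      · -- I' ∪ S is an order ideal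
        intro x y hxy hy
        rcases Finset.mem_union.1 hy with hy | hy
        · exact Finset.mem_union_left _ (hI' x y hxy hy)
        · by_cases hxI : x ∈ I'
          · exact Finset.mem_union_left _ hxI
          · have := (mem_minSet'.1 hy).2 x (by simpa using hxI) hxy
            exact Finset.mem_union_right _ (this ▸ hy)
      · -- S ⊆ maxSet (I' ∪ S)
        intro s hs
        rw [mem_maxSet']
        refine ⟨Finset.mem_union_right _ hs, fun y hy hsy => ?_⟩
        rcases Finset.mem_union.1 hy with hy | hy
        · exact absurd hsy (S_not_le hI' hs hy)
        · exact ((mem_minSet'.1 hy).2 s (mem_minSet'.1 hs).1 hsy).symm ▸ rfl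
      · -- Bset I' (I' ∪ S) = ∅
        rw [Finset.eq_empty_iff_forall_notMem]
        intro x hx
        rw [mem_Bset] at hx
        have hxI : x ∉ I' := fun h => hx.1 (Finset.mem_union_left _ h)
        obtain ⟨s, hs, hsx⟩ := not_mem_exists_S hxI
        exact hx.2.2 s hs hsx
  calc ∑ L ∈ idx, (if Bset I' L = ∅ then (∏ x ∈ L, (p x)⁻¹) * ∏ x ∈ S, p x else 0)
      = ∑ L ∈ idx.filter (fun L => Bset I' L = ∅),
          (∏ x ∈ L, (p x)⁻¹) * ∏ x ∈ S, p x := (Finset.sum_filter _ _).symm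
    _ = (∏ x ∈ I' ∪ S, (p x)⁻¹) * ∏ x ∈ S, p x := by rw [hfilter, Finset.sum_singleton]
    _ = ∏ x ∈ I', (p x)⁻¹ := by
        rw [Finset.prod_union hSdisj, mul_assoc, ← Finset.prod_mul_distrib]
        simp [inv_mul_cancel₀, hpne]

/-- The rowmotion Markov chain of `J(P)` has stationary distribution
`π(I) = (1/Z) ∏_{x ∈ I} (p x)⁻¹`, where `Z = Σ_{I' ∈ J(P)} ∏_{x' ∈ I'} (p x')⁻¹`. -/
theorem rowmotion_stationary (p : α → ℝ) (hp : ∀ x : α, 0 < p x ∧ p x < 1) :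
    ∀ I' : Finset α, IsOrderIdeal I' →
      ∑ I ∈ univ.filter (fun I : Finset α => IsOrderIdeal I),
        ((1 / ∑ J ∈ univ.filter (fun J : Finset α => IsOrderIdeal J), ∏ x ∈ J, (p x)⁻¹)
            * ∏ x ∈ I, (p x)⁻¹) * rowTrans p I I'
      = (1 / ∑ J ∈ univ.filter (fun J : Finset α => IsOrderIdeal J), ∏ x ∈ J, (p x)⁻¹)
          * ∏ x ∈ I', (p x)⁻¹ := by
  intro I' hI'
  have h := core_identity p hp I' hI'
  calc ∑ I ∈ univ.filter (fun I : Finset α => IsOrderIdeal I),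
        ((1 / ∑ J ∈ univ.filter (fun J : Finset α => IsOrderIdeal J), ∏ x ∈ J, (p x)⁻¹)
            * ∏ x ∈ I, (p x)⁻¹) * rowTrans p I I'
      = (1 / ∑ J ∈ univ.filter (fun J : Finset α => IsOrderIdeal J), ∏ x ∈ J, (p x)⁻¹)
          * ∑ I ∈ univ.filter (fun I : Finset α => IsOrderIdeal I),
            (∏ x ∈ I, (p x)⁻¹) * rowTrans p I I' := by
        rw [Finset.mul_sum]; exact Finset.sum_congr rfl fun I _ => by ring
    _ = _ := by rw [h]
end

section
/- Let P be an n-element antichain, p ∈ (0,1), and let Q be the |2^P| × |2^P| transition matrix with Q(I, I') = p^{|P \ I'|} (1 − p)^{|I ∩ I'|} if P \ I' ⊆ I and 0 otherwise. For each I ⊆ P, the function f_I : 2^P → ℝ defined by f_I(A) = p^{−|I|/2} (−p)^{|I ∩ A|} is an eigenvector of Q with eigenvalue (−p)^{|I|}, i.e., Σ_{A'} Q(A, A') f_I(A') = (−p)^{|I|} f_I(A) for all A ⊆ P. -/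
open Finset

variable {α : Type*} [Fintype α] [DecidableEq α]

/-- The transition matrix of the rowmotion Markov chain on the Boolean lattice `2^P`:
`Q(I, I') = p^{|P \ I'|} (1 - p)^{|I ∩ I'|}` if `P \ I' ⊆ I`, and `0` otherwise. -/
noncomputable def Qmat (p : ℝ) (I I' : Finset α) : ℝ :=
  if univ \ I' ⊆ I then p ^ (univ \ I').card * (1 - p) ^ (I ∩ I').card else 0

/-- The eigenfunction `f_I(A) = p^{-|I|/2} (-p)^{|I ∩ A|}`. -/
noncomputable def fEig (p : ℝ) (I A : Finset α) : ℝ :=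
  p ^ (-(I.card : ℝ) / 2) * (-p) ^ (I ∩ A).card

lemma key_sum (p : ℝ) (I A : Finset α) :
    ∑ A' : Finset α, Qmat p A A' * (-p) ^ (I ∩ A').card
      = (-p) ^ I.card * (-p) ^ (I ∩ A).card := by
  have h1 : ∑ A' : Finset α, Qmat p A A' * (-p) ^ (I ∩ A').card
      = ∑ A' ∈ univ.filter (fun A' : Finset α => univ \ A' ⊆ A),
          p ^ (univ \ A').card * (1 - p) ^ (A ∩ A').card * (-p) ^ (I ∩ A').card := by
    rw [sum_filter]
    refine sum_congr rfl fun A' _ => ?_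
    by_cases h : univ \ A' ⊆ A <;> simp [Qmat, h]
  have h2 : ∑ A' ∈ univ.filter (fun A' : Finset α => univ \ A' ⊆ A),
          p ^ (univ \ A').card * (1 - p) ^ (A ∩ A').card * (-p) ^ (I ∩ A').card
      = ∑ S ∈ A.powerset,
          p ^ (A \ S).card * (1 - p) ^ S.card * ((-p) ^ (I \ A).card * (-p) ^ (I ∩ S).card) := by
    refine (sum_nbij' (fun S => (univ \ A) ∪ S) (fun A' => A' ∩ A) ?_ ?_ ?_ ?_ ?_).symm
    · intro S _
      simp only [mem_filter, mem_univ, true_and]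
      intro x hx
      simp only [mem_sdiff, mem_union, mem_univ, true_and] at hx
      push_neg at hx
      exact hx.1
    · intro A' _
      exact mem_powerset.2 inter_subset_right
    · intro S hS
      have hS' := mem_powerset.1 hS
      ext x
      simp only [mem_inter, mem_union, mem_sdiff, mem_univ, true_and]
      constructor
      · rintro ⟨h | h, hA⟩
        · exact absurd hA h
        · exact h
      · exact fun h => ⟨Or.inr h, hS' h⟩
    · intro A' hA'
      have hA'' := (mem_filter.1 hA').2
      ext x
      simp only [mem_union, mem_sdiff, mem_inter, mem_univ, true_and]
      constructor
      · rintro (h | ⟨h, _⟩)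
        · by_contra hx
          exact h (hA'' (mem_sdiff.2 ⟨mem_univ x, hx⟩))
        · exact h
      · intro h
        by_cases hx : x ∈ A
        · exact Or.inr ⟨h, hx⟩
        · exact Or.inl hx
    · intro S hS
      have hS' := mem_powerset.1 hS
      have e1 : univ \ ((univ \ A) ∪ S) = A \ S := by
        ext x; simp only [mem_sdiff, mem_union, mem_univ, true_and]; tauto
      have e2 : A ∩ ((univ \ A) ∪ S) = S := by
        ext x
        simp only [mem_inter, mem_union, mem_sdiff, mem_univ, true_and]
        exact ⟨fun ⟨hA, h⟩ => h.resolve_left (fun h' => h' hA), fun h => ⟨hS' h, Or.inr h⟩⟩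
      have e3 : I ∩ ((univ \ A) ∪ S) = (I \ A) ∪ (I ∩ S) := by
        ext x
        simp only [mem_inter, mem_union, mem_sdiff, mem_univ, true_and]
        tauto
      have e4 : Disjoint (I \ A) (I ∩ S) := by
        refine disjoint_left.2 fun x hx hx' => ?_
        simp only [mem_sdiff] at hx
        exact hx.2 (hS' (mem_inter.1 hx').2)
      simp only [e1, e2, e3, card_union_of_disjoint e4, pow_add]
  have h3 : ∑ S ∈ A.powerset,
        p ^ (A \ S).card * (1 - p) ^ S.card * ((-p) ^ (I \ A).card * (-p) ^ (I ∩ S).card)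
      = (-p) ^ (I \ A).card * (p * p) ^ (A ∩ I).card := by
    have hprod := prod_add (fun i => (1 - p) * (if i ∈ I then -p else 1)) (fun _ => p) A
    have hL : ∏ i ∈ A, ((1 - p) * (if i ∈ I then -p else 1) + p)
        = (p * p) ^ (A ∩ I).card := by
      have : ∀ i ∈ A, ((1 - p) * (if i ∈ I then -p else 1) + p)
          = (if i ∈ I then p * p else 1) := by
        intro i _; split <;> ring
      rw [prod_congr rfl this, prod_ite_mem A I (fun _ => p * p), prod_const]
    have hR : ∀ t ∈ A.powerset,
        (∏ i ∈ t, (1 - p) * (if i ∈ I then -p else 1)) * ∏ _i ∈ A \ t, p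
          = (1 - p) ^ t.card * (-p) ^ (I ∩ t).card * p ^ (A \ t).card := by
      intro t _
      rw [prod_mul_distrib, prod_const, prod_const,
        prod_ite_mem t I (fun _ => (-p : ℝ)), prod_const, inter_comm]
    rw [hL, sum_congr rfl hR] at hprod
    have step : ∑ S ∈ A.powerset,
        p ^ (A \ S).card * (1 - p) ^ S.card * ((-p) ^ (I \ A).card * (-p) ^ (I ∩ S).card)
      = (-p) ^ (I \ A).card
        * ∑ t ∈ A.powerset, (1 - p) ^ t.card * (-p) ^ (I ∩ t).card * p ^ (A \ t).card := by
      rw [mul_sum]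
      refine sum_congr rfl fun t _ => ?_
      ring
    rw [step, ← hprod]
  have h4 : (-p) ^ (I \ A).card * (p * p) ^ (A ∩ I).card
      = (-p) ^ I.card * (-p) ^ (I ∩ A).card := by
    have : p * p = (-p) * (-p) := by ring
    rw [this, mul_pow, ← pow_add, ← pow_add, inter_comm A I, ← pow_add]
    congr 1
    have := card_sdiff_add_card_inter I A
    omega
  rw [h1, h2, h3, h4]

/-- Each `f_I` is an eigenvector of `Q` with eigenvalue `(-p)^{|I|}`. -/
theorem fEig_is_eigenvector (p : ℝ) (hp : 0 < p ∧ p < 1) (I : Finset α) :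
    ∀ A : Finset α,
      ∑ A' : Finset α, Qmat p A A' * fEig p I A' = (-p) ^ I.card * fEig p I A := by
  intro A
  have key := key_sum p I A
  calc ∑ A' : Finset α, Qmat p A A' * fEig p I A'
      = p ^ (-(I.card : ℝ) / 2) * ∑ A' : Finset α, Qmat p A A' * (-p) ^ (I ∩ A').card := by
        rw [mul_sum]
        refine sum_congr rfl fun A' _ => ?_
        unfold fEig; ring
    _ = p ^ (-(I.card : ℝ) / 2) * ((-p) ^ I.card * (-p) ^ (I ∩ A).card) := by rw [key]
    _ = (-p) ^ I.card * fEig p I A := by unfold fEig; ring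
end

section
/- Let P be an n-element antichain with rowmotion Markov chain as above, all probabilities equal to p ∈ (0,1), and let X_t be the size of the state at time t with X_0 = 0. With f(x) = 1 − (1+p)x/n, the variance of f(X_t) equals p/n − p^{2t}/n + ((1−p)/n)(−p)^t. Moreover, if X is the size of a set distributed according to the stationary distribution π(A) = p^{−|A|}/(1 + 1/p)^n, then Var(f(X)) = p/n and E[f(X)] = 0. -/
open Finset

set_option linter.unusedSectionVars false

variable {α : Type*} [Fintype α] [DecidableEq α]

/-- One step of the rowmotion Markov chain on `2^P` applied to a distribution `μ`. -/
noncomputable def qStep (p : ℝ) (μ : Finset α → ℝ) : Finset α → ℝ :=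
  fun A' => ∑ A : Finset α, μ A * Qmat p A A'

/-- The stationary distribution `π(A) = p^{-|A|} / (1 + 1/p)^n` on `2^P`. -/
noncomputable def statDist (p : ℝ) (n : ℕ) (A : Finset α) : ℝ :=
  (p⁻¹) ^ A.card / (1 + 1 / p) ^ n

/-- `f(x) = 1 - (1+p)x/n`. -/
noncomputable def fLin (p : ℝ) (n : ℕ) (x : ℝ) : ℝ := 1 - (1 + p) * x / n

/-- The Bernoulli product measure with parameter `a` on subsets of an `n`-element set. -/
noncomputable def bern (a : ℝ) (n : ℕ) (A : Finset α) : ℝ :=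
  a ^ A.card * (1 - a) ^ (n - A.card)

lemma sum_pow_powerset (s : Finset α) (x y : ℝ) :
    ∑ A ∈ s.powerset, x ^ A.card * y ^ (s.card - A.card) = (x + y) ^ s.card := by
  induction s using Finset.induction_on with
  | empty => simp
  | @insert i s hi ih =>
    rw [Finset.sum_powerset_insert hi, card_insert_of_notMem hi]
    have h1 : ∀ A ∈ s.powerset,
        x ^ A.card * y ^ (s.card + 1 - A.card)
          = y * (x ^ A.card * y ^ (s.card - A.card)) := by
      intro A hA
      have hle := card_le_card (mem_powerset.1 hA)
      rw [show s.card + 1 - A.card = (s.card - A.card) + 1 by omega]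
      ring
    have h2 : ∀ A ∈ s.powerset,
        x ^ (insert i A).card * y ^ (s.card + 1 - (insert i A).card)
          = x * (x ^ A.card * y ^ (s.card - A.card)) := by
      intro A hA
      have hle := card_le_card (mem_powerset.1 hA)
      have hiA : i ∉ A := fun h => hi (mem_powerset.1 hA h)
      rw [card_insert_of_notMem hiA, show s.card + 1 - (A.card + 1) = s.card - A.card by omega]
      ring
    rw [sum_congr rfl h1, sum_congr rfl h2, ← mul_sum, ← mul_sum, ih]
    ring

lemma mom0 (s : Finset α) (a : ℝ) :
    ∑ A ∈ s.powerset, a ^ A.card * (1 - a) ^ (s.card - A.card) = 1 := by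
  simpa using sum_pow_powerset s a (1 - a)

lemma mom1 (s : Finset α) (a : ℝ) :
    ∑ A ∈ s.powerset, (A.card : ℝ) * (a ^ A.card * (1 - a) ^ (s.card - A.card))
      = s.card * a := by
  induction s using Finset.induction_on with
  | empty => simp
  | @insert i s hi ih =>
    rw [Finset.sum_powerset_insert hi, card_insert_of_notMem hi]
    have h1 : ∀ A ∈ s.powerset,
        (A.card : ℝ) * (a ^ A.card * (1 - a) ^ (s.card + 1 - A.card))
          = (1 - a) * ((A.card : ℝ) * (a ^ A.card * (1 - a) ^ (s.card - A.card))) := by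
      intro A hA
      have hle := card_le_card (mem_powerset.1 hA)
      rw [show s.card + 1 - A.card = (s.card - A.card) + 1 by omega]
      ring
    have h2 : ∀ A ∈ s.powerset,
        ((insert i A).card : ℝ)
            * (a ^ (insert i A).card * (1 - a) ^ (s.card + 1 - (insert i A).card))
          = a * ((A.card : ℝ) * (a ^ A.card * (1 - a) ^ (s.card - A.card)))
            + a * (a ^ A.card * (1 - a) ^ (s.card - A.card)) := by
      intro A hA
      have hle := card_le_card (mem_powerset.1 hA)
      have hiA : i ∉ A := fun h => hi (mem_powerset.1 hA h)
      rw [card_insert_of_notMem hiA, show s.card + 1 - (A.card + 1) = s.card - A.card by omega]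
      push_cast
      ring
    rw [sum_congr rfl h1, sum_congr rfl h2, sum_add_distrib, ← mul_sum, ← mul_sum, ← mul_sum,
      ih, mom0]
    push_cast
    ring

lemma mom2 (s : Finset α) (a : ℝ) :
    ∑ A ∈ s.powerset, (A.card : ℝ) ^ 2 * (a ^ A.card * (1 - a) ^ (s.card - A.card))
      = s.card * a + s.card * (s.card - 1) * a ^ 2 := by
  induction s using Finset.induction_on with
  | empty => simp
  | @insert i s hi ih =>
    rw [Finset.sum_powerset_insert hi, card_insert_of_notMem hi]
    have h1 : ∀ A ∈ s.powerset,
        (A.card : ℝ) ^ 2 * (a ^ A.card * (1 - a) ^ (s.card + 1 - A.card))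
          = (1 - a) * ((A.card : ℝ) ^ 2 * (a ^ A.card * (1 - a) ^ (s.card - A.card))) := by
      intro A hA
      have hle := card_le_card (mem_powerset.1 hA)
      rw [show s.card + 1 - A.card = (s.card - A.card) + 1 by omega]
      ring
    have h2 : ∀ A ∈ s.powerset,
        ((insert i A).card : ℝ) ^ 2
            * (a ^ (insert i A).card * (1 - a) ^ (s.card + 1 - (insert i A).card))
          = a * ((A.card : ℝ) ^ 2 * (a ^ A.card * (1 - a) ^ (s.card - A.card)))
            + 2 * a * ((A.card : ℝ) * (a ^ A.card * (1 - a) ^ (s.card - A.card)))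
            + a * (a ^ A.card * (1 - a) ^ (s.card - A.card)) := by
      intro A hA
      have hle := card_le_card (mem_powerset.1 hA)
      have hiA : i ∉ A := fun h => hi (mem_powerset.1 hA h)
      rw [card_insert_of_notMem hiA, show s.card + 1 - (A.card + 1) = s.card - A.card by omega]
      push_cast
      ring
    rw [sum_congr rfl h1, sum_congr rfl h2, sum_add_distrib, sum_add_distrib,
      ← mul_sum, ← mul_sum, ← mul_sum, ← mul_sum, ih, mom0, mom1]
    push_cast
    ring

lemma bmom0 (a : ℝ) : ∑ A : Finset α, bern a (Fintype.card α) A = 1 := by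
  have := mom0 (univ : Finset α) a
  rw [powerset_univ, card_univ] at this
  simpa [bern] using this

lemma bmom1 (a : ℝ) :
    ∑ A : Finset α, (A.card : ℝ) * bern a (Fintype.card α) A = (Fintype.card α) * a := by
  have := mom1 (univ : Finset α) a
  rw [powerset_univ, card_univ] at this
  simpa [bern] using this

lemma bmom2 (a : ℝ) :
    ∑ A : Finset α, (A.card : ℝ) ^ 2 * bern a (Fintype.card α) A
      = (Fintype.card α) * a + (Fintype.card α) * ((Fintype.card α) - 1) * a ^ 2 := by
  have := mom2 (univ : Finset α) a
  rw [powerset_univ, card_univ] at this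
  simpa [bern] using this

lemma qStep_bern (p a : ℝ) :
    qStep p (bern a (Fintype.card α) : Finset α → ℝ)
      = bern (1 - p * a) (Fintype.card α) := by
  funext A'
  unfold qStep bern
  set n := Fintype.card α with hn
  set m := A'.card with hm
  have hmn : m ≤ n := card_le_univ A'
  have hsd : (univ \ A').card = n - m := by
    rw [card_sdiff_of_subset (subset_univ _), card_univ]
  rw [← sum_filter_of_ne (p := fun A => univ \ A' ⊆ A)
    (f := fun A => a ^ A.card * (1 - a) ^ (n - A.card) * Qmat p A A')
    (by
      intro A _ hne
      by_contra hc
      exact hne (by simp only [Qmat, if_neg hc, mul_zero]))]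
  rw [Finset.sum_nbij' (i := fun A => A ∩ A') (j := fun S => (univ \ A') ∪ S)
    (t := A'.powerset)
    (g := fun S => (a * p) ^ (n - m) * ((a * (1 - p)) ^ S.card * (1 - a) ^ (m - S.card)))
    (by intro A _; exact mem_powerset.2 inter_subset_right)
    (by
      intro S _
      simp only [mem_filter, mem_univ, true_and]
      exact subset_union_left)
    (by
      intro A hA
      have hsub : univ \ A' ⊆ A := (mem_filter.1 hA).2
      ext x
      simp only [mem_union, mem_sdiff, mem_univ, true_and, mem_inter]
      constructor
      · rintro (hx | ⟨hx, _⟩)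
        · exact hsub (by simp [hx])
        · exact hx
      · intro hx
        by_cases hx' : x ∈ A'
        · exact Or.inr ⟨hx, hx'⟩
        · exact Or.inl hx'
    )
    (by
      intro S hS
      have hS' := mem_powerset.1 hS
      ext x
      simp only [mem_inter, mem_union, mem_sdiff, mem_univ, true_and]
      constructor
      · rintro ⟨hx | hx, hx'⟩
        · exact absurd hx' hx
        · exact hx
      · intro hx
        exact ⟨Or.inr hx, hS' hx⟩)
    (by
      intro A hA
      have hsub : univ \ A' ⊆ A := (mem_filter.1 hA).2
      have hAeq : A = (univ \ A') ∪ (A ∩ A') := by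
        ext x
        simp only [mem_union, mem_sdiff, mem_univ, true_and, mem_inter]
        constructor
        · intro hx
          by_cases hx' : x ∈ A'
          · exact Or.inr ⟨hx, hx'⟩
          · exact Or.inl hx'
        · rintro (hx | ⟨hx, _⟩)
          · exact hsub (by simp [hx])
          · exact hx
      have hdisj : Disjoint (univ \ A') (A ∩ A') := by
        refine disjoint_left.2 ?_
        intro x hx hx'
        exact (mem_sdiff.1 hx).2 (mem_inter.1 hx').2
      have hcard : A.card = (n - m) + (A ∩ A').card := by
        conv_lhs => rw [hAeq]
        rw [card_union_of_disjoint hdisj, hsd]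
      have hsm : (A ∩ A').card ≤ m := card_le_card inter_subset_right
      have hnc : n - A.card = m - (A ∩ A').card := by omega
      unfold Qmat
      rw [if_pos hsub, hnc, hcard, hsd, pow_add]
      simp only [mul_pow]
      ring)]
  rw [← mul_sum, sum_pow_powerset]
  have h1 : a * (1 - p) + (1 - a) = 1 - a * p := by ring
  rw [h1, show (1 : ℝ) - (1 - p * a) = p * a by ring]
  ring

/-- The probability that an element is present at time `t`. -/
noncomputable def aSeq (p : ℝ) : ℕ → ℝ
  | 0 => 0
  | t + 1 => 1 - p * aSeq p t

lemma aSeq_closed (p : ℝ) (t : ℕ) : (1 + p) * aSeq p t = 1 - (-p) ^ t := by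
  induction t with
  | zero => simp [aSeq]
  | succ t ih =>
    simp only [aSeq, pow_succ]
    linear_combination (-p) * ih

lemma dist_eq (p : ℝ) (t : ℕ) :
    (qStep p)^[t] (fun B : Finset α => if B = (∅ : Finset α) then (1 : ℝ) else 0)
      = bern (aSeq p t) (Fintype.card α) := by
  induction t with
  | zero =>
    funext B
    simp only [Function.iterate_zero, id_eq]
    by_cases hB : B = ∅
    · simp [hB, bern, aSeq]
    · have hc : B.card ≠ 0 := by simpa [card_eq_zero] using hB
      simp [hB, bern, aSeq, zero_pow hc]
  | succ t ih =>
    rw [Function.iterate_succ_apply', ih, qStep_bern]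
    rfl

lemma mean_bern (p a : ℝ) (hn : ((Fintype.card α : ℕ) : ℝ) ≠ 0) :
    ∑ A : Finset α, bern a (Fintype.card α) A * fLin p (Fintype.card α) (A.card : ℝ)
      = 1 - (1 + p) * a := by
  have h : ∀ A : Finset α,
      bern a (Fintype.card α) A * fLin p (Fintype.card α) (A.card : ℝ)
        = bern a (Fintype.card α) A
          - ((1 + p) / (Fintype.card α)) * ((A.card : ℝ) * bern a (Fintype.card α) A) := by
    intro A
    unfold fLin
    ring
  rw [Finset.sum_congr rfl (fun A _ => h A), sum_sub_distrib, ← mul_sum, bmom0, bmom1]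
  field_simp

lemma var_bern (p a : ℝ) (hn : ((Fintype.card α : ℕ) : ℝ) ≠ 0) :
    (∑ A : Finset α, bern a (Fintype.card α) A * fLin p (Fintype.card α) (A.card : ℝ) ^ 2)
      - (∑ A : Finset α, bern a (Fintype.card α) A * fLin p (Fintype.card α) (A.card : ℝ)) ^ 2
      = (1 + p) ^ 2 * (a - a ^ 2) / (Fintype.card α) := by
  have h : ∀ A : Finset α,
      bern a (Fintype.card α) A * fLin p (Fintype.card α) (A.card : ℝ) ^ 2
        = bern a (Fintype.card α) A
          - 2 * ((1 + p) / (Fintype.card α)) * ((A.card : ℝ) * bern a (Fintype.card α) A)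
          + ((1 + p) / (Fintype.card α)) ^ 2
              * ((A.card : ℝ) ^ 2 * bern a (Fintype.card α) A) := by
    intro A
    unfold fLin
    ring
  rw [Finset.sum_congr rfl (fun A _ => h A), sum_add_distrib, sum_sub_distrib,
    ← mul_sum, ← mul_sum, bmom0, bmom1, bmom2, mean_bern p a hn]
  field_simp
  ring

lemma statDist_eq (p : ℝ) (hp0 : p ≠ 0) (hp1 : (1 : ℝ) + p ≠ 0) :
    (statDist p (Fintype.card α) : Finset α → ℝ) = bern (1 / (1 + p)) (Fintype.card α) := by
  funext A
  unfold statDist bern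
  have hA : A.card ≤ Fintype.card α := card_le_univ A
  have h1 : (1 : ℝ) + 1 / p = (1 + p) / p := by
    field_simp
    ring
  have h2 : (1 : ℝ) - 1 / (1 + p) = p / (1 + p) := by
    field_simp
    ring
  rw [h1, h2, div_pow, div_pow, div_pow, one_pow]
  have hk : p ^ (Fintype.card α - A.card) * p ^ A.card = p ^ (Fintype.card α) := by
    rw [← pow_add]
    congr 1
    omega
  have hpk : (p : ℝ) ^ A.card ≠ 0 := pow_ne_zero _ hp0
  have hppk : ((1 : ℝ) + p) ^ (Fintype.card α) ≠ 0 := pow_ne_zero _ hp1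
  field_simp
  have hq2 : (1 + p) ^ A.card * (1 + p) ^ (Fintype.card α - A.card) = (1 + p) ^ (Fintype.card α) := by
    rw [← pow_add]
    congr 1
    omega
  have e : (1 / p) ^ A.card * p ^ A.card = 1 := by
    rw [← mul_pow, one_div, inv_mul_cancel₀ hp0, one_pow]
  linear_combination (1 / p) ^ A.card * p ^ (Fintype.card α) * hq2
    - (1 / p) ^ A.card * (1 + p) ^ (Fintype.card α) * hk
    + p ^ (Fintype.card α - A.card) * (1 + p) ^ (Fintype.card α) * e

/-- With `X_t` the size of the state of the rowmotion Markov chain on `2^P` at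
time `t`, started at `X_0 = 0` (the empty set), one has
`Var(f(X_t)) = p/n - p^{2t}/n + ((1-p)/n)(-p)^t`; moreover, if `X` is the size of a
set distributed according to the stationary distribution `π`, then `E[f(X)] = 0` and
`Var(f(X)) = p/n`. -/
theorem variance_f (p : ℝ) (hp : 0 < p ∧ p < 1) [Nonempty α] (t : ℕ) :
    ((∑ A : Finset α,
        (qStep p)^[t] (fun B => if B = (∅ : Finset α) then (1 : ℝ) else 0) A *
          fLin p (Fintype.card α) (A.card : ℝ) ^ 2)
      - (∑ A : Finset α,
          (qStep p)^[t] (fun B => if B = (∅ : Finset α) then (1 : ℝ) else 0) A *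
            fLin p (Fintype.card α) (A.card : ℝ)) ^ 2
      = p / (Fintype.card α) - p ^ (2 * t) / (Fintype.card α)
          + ((1 - p) / (Fintype.card α)) * (-p) ^ t) ∧
    (∑ A : Finset α, statDist p (Fintype.card α) A * fLin p (Fintype.card α) (A.card : ℝ))
      = 0 ∧
    ((∑ A : Finset α,
        statDist p (Fintype.card α) A * fLin p (Fintype.card α) (A.card : ℝ) ^ 2)
      - (∑ A : Finset α,
          statDist p (Fintype.card α) A * fLin p (Fintype.card α) (A.card : ℝ)) ^ 2
      = p / (Fintype.card α)) := by
  obtain ⟨hp0, hp1⟩ := hp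
  have hn : ((Fintype.card α : ℕ) : ℝ) ≠ 0 := by
    exact Nat.cast_ne_zero.2 Fintype.card_pos.ne'
  have hp1' : (1 : ℝ) + p ≠ 0 := by positivity
  have hq : p ^ (2 * t) = ((-p) ^ t) ^ 2 := by
    rw [pow_mul, ← neg_sq, ← pow_mul, mul_comm, pow_mul]
  refine ⟨?_, ?_, ?_⟩
  · rw [dist_eq, var_bern p (aSeq p t) hn]
    have ha := aSeq_closed p t
    have key : (1 + p) ^ 2 * (aSeq p t - aSeq p t ^ 2)
        = p - ((-p) ^ t) ^ 2 + (1 - p) * (-p) ^ t := by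
      linear_combination ((1 + p) - (1 + p) * aSeq p t - (1 - (-p) ^ t)) * ha
    rw [key, hq]
    ring
  · rw [statDist_eq p hp0.ne' hp1', mean_bern p _ hn]
    field_simp
    ring
  · rw [statDist_eq p hp0.ne' hp1', var_bern p _ hn]
    field_simp
    ring
end

section
/- Let P be an n-element antichain, p ∈ (0,1), and let Q and π be the transition matrix and stationary distribution of the rowmotion Markov chain on 2^P with all probabilities equal to p. For c > 1/2 and t = ⌈(1/2) log_{1/p} n + c⌉ (any integer t ≥ (1/2) log_{1/p} n + c), we have max_{x ⊆ P} d_TV(Q^t(x,·), π) ≤ (1/2)(e^{p^{2c−1}} − 1)^{1/2}. -/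
open Finset

variable {α : Type*} [Fintype α] [DecidableEq α]

/-- Product-form measures on `2^P`. -/
noncomputable def pm (w : α → ℝ) (A : Finset α) : ℝ :=
  ∏ a, if a ∈ A then w a else 1 - w a

lemma sum_prod_ite (F G : α → ℝ) :
    ∑ A : Finset α, (∏ a, if a ∈ A then F a else G a) = ∏ a, (F a + G a) := by
  rw [Fintype.prod_add]
  refine Finset.sum_congr rfl fun A _ => ?_
  rw [Finset.prod_ite]
  congr 1
  · congr 1; ext a; simp
  · congr 1; ext a; simp

lemma Qmat_eq_prod (p : ℝ) (A A' : Finset α) :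
    Qmat p A A' = ∏ a, (if a ∈ A then (if a ∈ A' then 1 - p else p)
      else (if a ∈ A' then (1 : ℝ) else 0)) := by
  unfold Qmat
  split_ifs with h
  · rw [← Finset.prod_sdiff (Finset.subset_univ A')]
    congr 1
    · rw [Finset.prod_congr rfl (g := fun _ => p) (fun a ha => by
        have h1 : a ∈ A := h ha
        have h2 : a ∉ A' := (Finset.mem_sdiff.1 ha).2
        simp [h1, h2]), Finset.prod_const]
    · rw [Finset.prod_congr rfl
        (g := fun a => if a ∈ A then (1 - p) else 1) (fun a ha => by simp [ha]),
        Finset.prod_ite, Finset.prod_const, Finset.prod_const, one_pow, mul_one]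
      congr 2
      rw [Finset.filter_mem_eq_inter, Finset.inter_comm]
  · obtain ⟨a, ha, haA⟩ := Finset.not_subset.1 h
    have ha' : a ∉ A' := (Finset.mem_sdiff.1 ha).2
    exact (Finset.prod_eq_zero (Finset.mem_univ a) (by simp [haA, ha'])).symm

lemma qStep_pm (p : ℝ) (w : α → ℝ) :
    qStep p (pm w) = pm (fun a => 1 - p * w a) := by
  funext A'
  unfold qStep
  have key : ∀ A : Finset α, pm w A * Qmat p A A' =
      ∏ a, (if a ∈ A then w a * (if a ∈ A' then 1 - p else p)
            else (1 - w a) * (if a ∈ A' then (1:ℝ) else 0)) := by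
    intro A
    rw [Qmat_eq_prod, pm, ← Finset.prod_mul_distrib]
    exact Finset.prod_congr rfl fun a _ => by split_ifs <;> ring
  simp_rw [key]
  rw [sum_prod_ite]
  unfold pm
  refine Finset.prod_congr rfl fun a _ => ?_
  split_ifs with h <;> ring

/-- Closed-form evolved weights for the product chain started at `x`. -/
noncomputable def wt (p : ℝ) (x : Finset α) (t : ℕ) (a : α) : ℝ :=
  1 / (1 + p) + (-p) ^ t * ((if a ∈ x then 1 else 0) - 1 / (1 + p))

lemma pm_wt_zero (p : ℝ) (x : Finset α) :
    pm (wt p x 0) = fun B => if B = x then (1 : ℝ) else 0 := by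
  funext A
  have hw : ∀ a : α, wt p x 0 a = if a ∈ x then 1 else 0 := by
    intro a; unfold wt; ring
  unfold pm
  simp_rw [hw]
  by_cases hA : A = x
  · subst hA
    rw [if_pos rfl]
    refine Finset.prod_eq_one fun a _ => by split_ifs with h1 h2 h3 <;> simp_all
  · rw [if_neg hA]
    have : ∃ a, (a ∈ A ∧ a ∉ x) ∨ (a ∉ A ∧ a ∈ x) := by
      by_contra hcontra
      push_neg at hcontra
      exact hA (Finset.ext fun a => by
        have := hcontra a
        tauto)
    obtain ⟨a, ha⟩ := this
    refine Finset.prod_eq_zero (Finset.mem_univ a) ?_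
    rcases ha with ⟨h1, h2⟩ | ⟨h1, h2⟩ <;> simp [h1, h2]

lemma iterate_qStep (p : ℝ) (hp : 0 < p) (x : Finset α) (t : ℕ) :
    (qStep p)^[t] (fun B => if B = x then (1 : ℝ) else 0) = pm (wt p x t) := by
  induction t with
  | zero => simp [pm_wt_zero p x]
  | succ t ih =>
      rw [Function.iterate_succ_apply', ih, qStep_pm]
      have hwe : (fun a => 1 - p * wt p x t a) = wt p x (t + 1) := by
        funext a
        unfold wt
        have h1p : (1 : ℝ) + p ≠ 0 := by positivity
        rw [pow_succ]
        field_simp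
        ring
      rw [hwe]

lemma statDist_eq_pm (p : ℝ) (hp : 0 < p) :
    (statDist p (Fintype.card α) : Finset α → ℝ) = pm (fun _ : α => 1 / (1 + p)) := by
  funext A
  have h1p : (0:ℝ) < 1 + p := by positivity
  unfold statDist pm
  rw [Finset.prod_ite, Finset.prod_const, Finset.prod_const]
  have hfil1 : (univ.filter (· ∈ A)) = A := by ext a; simp
  have hfil2 : (univ.filter (· ∉ A)).card = Fintype.card α - A.card := by
    have : (univ.filter (· ∉ A)) = Aᶜ := by ext a; simp
    rw [this, Finset.card_compl]
  rw [hfil1, hfil2]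
  have hle : A.card ≤ Fintype.card α := A.card_le_univ
  have h2 : (1 : ℝ) - 1 / (1 + p) = p / (1 + p) := by field_simp; ring
  rw [h2]
  have h3 : (1 : ℝ) + 1 / p = (1 + p) / p := by field_simp; ring
  rw [h3, div_pow, div_pow, div_pow]
  rw [div_mul_div_comm, ← pow_add, Nat.add_sub_cancel' hle]
  have hppow : p ^ (Fintype.card α - A.card) = p ^ (Fintype.card α) / p ^ A.card :=
    pow_sub₀ p hp.ne' hle
  rw [hppow]
  field_simp
  rw [← mul_pow, one_div, inv_mul_cancel₀ hp.ne']

lemma sum_pm_eq_one (w : α → ℝ) : ∑ A : Finset α, pm w A = 1 := by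
  unfold pm
  rw [sum_prod_ite]
  simp

/-- Cutoff upper bound: for `c > 1/2` and any integer number of steps
`t ≥ (1/2) log_{1/p} n + c`, the total variation distance of the rowmotion Markov
chain on the Boolean lattice `2^P` from stationarity, starting from any state,
is at most `(1/2)(e^{p^{2c-1}} - 1)^{1/2}`. -/
theorem boolean_cutoff_upper_bound [Nonempty α] (p : ℝ) (hp : 0 < p ∧ p < 1)
    (c : ℝ) (hc : 1 / 2 < c) (t : ℕ)
    (ht : (1 / 2) * Real.logb (1 / p) (Fintype.card α) + c ≤ (t : ℝ)) :
    ∀ x : Finset α,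
      (1 / 2) * ∑ A : Finset α,
          |(qStep p)^[t] (fun B => if B = x then (1 : ℝ) else 0) A
            - statDist p (Fintype.card α) A|
        ≤ (1 / 2) * Real.sqrt (Real.exp (p ^ (2 * c - 1)) - 1) := by
  obtain ⟨hp0, hp1⟩ := hp
  intro x
  set n := Fintype.card α with hn
  have hn1 : 1 ≤ n := Fintype.card_pos
  have h1p : (0:ℝ) < 1 + p := by positivity
  set ws : ℝ := 1 / (1 + p) with hws
  have hws0 : 0 < ws := by positivity
  have hws1 : ws < 1 := by
    rw [hws, div_lt_one h1p]; linarith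
  have hwc : (0:ℝ) < 1 - ws := by linarith
  set w : α → ℝ := wt p x t with hwdef
  set μ : Finset α → ℝ := pm w with hμ
  set π : Finset α → ℝ := pm (fun _ : α => ws) with hπ
  have hμeq : (qStep p)^[t] (fun B => if B = x then (1 : ℝ) else 0) = μ :=
    iterate_qStep p hp0 x t
  have hπeq : (statDist p n : Finset α → ℝ) = π := statDist_eq_pm p hp0
  rw [hμeq, hπeq]
  -- positivity of π
  have hπpos : ∀ A : Finset α, 0 < π A := by
    intro A
    refine Finset.prod_pos fun a _ => ?_
    split_ifs <;> [exact hws0; exact hwc]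
  -- L := logb (1/p) n ≥ 0
  set L : ℝ := Real.logb (1 / p) n with hL
  have hbase : 1 < 1 / p := by rw [lt_div_iff₀ hp0]; linarith
  have hLnn : 0 ≤ L := Real.logb_nonneg hbase (by exact_mod_cast hn1)
  -- t ≥ 1
  have ht1 : 1 ≤ t := by
    by_contra h
    push_neg at h
    interval_cases t
    simp at ht
    nlinarith
  -- per-coordinate chi-square factor bound
  set K : ℕ := 2 * t - 1 with hK
  have hKcast : ((K : ℝ)) = 2 * (t : ℝ) - 1 := by
    rw [hK]
    have : 1 ≤ 2 * t := by omega
    push_cast [Nat.cast_sub this]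
    ring
  have hfactor : ∀ a : α,
      (w a ^ 2 / ws + (1 - w a) ^ 2 / (1 - ws)) = 1 + (w a - ws) ^ 2 / (ws * (1 - ws)) := by
    intro a
    field_simp
    ring
  have hdev : ∀ a : α, (w a - ws) ^ 2 / (ws * (1 - ws)) ≤ p ^ K := by
    intro a
    have hw : w a - ws = (-p) ^ t * ((if a ∈ x then 1 else 0) - ws) := by
      rw [hwdef, wt, hws]
      ring
    have habs : |(if a ∈ x then (1:ℝ) else 0) - ws| ≤ 1 / (1 + p) := by
      split_ifs with h
      · rw [abs_of_nonneg (by linarith)]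
        rw [hws]
        rw [sub_le_iff_le_add]
        rw [← add_div, le_div_iff₀ h1p]
        nlinarith
      · rw [zero_sub, abs_neg, abs_of_nonneg hws0.le, hws]
    have hsq : (w a - ws) ^ 2 ≤ p ^ (2 * t) / (1 + p) ^ 2 := by
      rw [hw, mul_pow]
      have h1 : ((-p) ^ t) ^ 2 = p ^ (2 * t) := by
        rw [← pow_mul, mul_comm t 2, pow_mul, neg_sq, ← pow_mul]
      rw [h1]
      have h2 : ((if a ∈ x then (1:ℝ) else 0) - ws) ^ 2 ≤ (1 / (1 + p)) ^ 2 := by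
        rw [← sq_abs]
        exact pow_le_pow_left₀ (abs_nonneg _) habs 2
      have h3 : (0:ℝ) ≤ p ^ (2 * t) := by positivity
      calc p ^ (2*t) * ((if a ∈ x then (1:ℝ) else 0) - ws) ^ 2
          ≤ p ^ (2*t) * (1 / (1+p))^2 := by nlinarith
        _ = p ^ (2*t) / (1+p)^2 := by rw [div_pow]; ring
    have hwsprod : ws * (1 - ws) = p / (1 + p) ^ 2 := by
      have h2 : (1:ℝ) - 1 / (1 + p) = p / (1 + p) := by field_simp; ring
      rw [hws, h2, div_mul_div_comm, one_mul, ← pow_two]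
    rw [hwsprod]
    rw [div_le_iff₀ (by positivity)]
    have hKpow : p ^ K * (p / (1 + p) ^ 2) = p ^ (2 * t) / (1 + p) ^ 2 := by
      have : K + 1 = 2 * t := by omega
      rw [← this, pow_succ]
      ring
    rw [hKpow]
    exact hsq
  -- chi-square identity and bound
  have hchi_id : ∑ A : Finset α, μ A ^ 2 / π A
      = ∏ a, (w a ^ 2 / ws + (1 - w a) ^ 2 / (1 - ws)) := by
    have hterm : ∀ A : Finset α, μ A ^ 2 / π A =
        ∏ a, (if a ∈ A then w a ^ 2 / ws else (1 - w a) ^ 2 / (1 - ws)) := by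
      intro A
      rw [hμ, hπ, pm, pm, ← Finset.prod_pow, ← Finset.prod_div_distrib]
      exact Finset.prod_congr rfl fun a _ => by split_ifs <;> rfl
    simp_rw [hterm]
    exact sum_prod_ite _ _
  have hprod_le : ∏ a, (w a ^ 2 / ws + (1 - w a) ^ 2 / (1 - ws))
      ≤ (1 + p ^ K) ^ n := by
    calc ∏ a, (w a ^ 2 / ws + (1 - w a) ^ 2 / (1 - ws))
        ≤ ∏ _a : α, (1 + p ^ K) := by
          refine Finset.prod_le_prod (fun a _ => ?_) (fun a _ => ?_)
          · rw [hfactor a]; positivity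
          · rw [hfactor a]
            linarith [hdev a]
      _ = (1 + p ^ K) ^ n := by rw [Finset.prod_const, Finset.card_univ]
  -- (1 + p^K)^n ≤ exp (n * p^K) ≤ exp (p^(2c-1))
  have hexp1 : ((1:ℝ) + p ^ K) ^ n ≤ Real.exp ((n : ℝ) * p ^ K) := by
    have h1 : (1:ℝ) + p ^ K ≤ Real.exp (p ^ K) := by
      have := Real.add_one_le_exp (p ^ K)
      linarith
    calc ((1:ℝ) + p ^ K) ^ n ≤ (Real.exp (p ^ K)) ^ n :=
          pow_le_pow_left₀ (by positivity) h1 n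
      _ = Real.exp ((n:ℝ) * p ^ K) := by
          rw [Real.exp_nat_mul]
  have hkey : (n : ℝ) * p ^ K ≤ p ^ (2 * c - 1) := by
    have hpK : (p : ℝ) ^ K = p ^ ((K : ℝ)) := by
      rw [Real.rpow_natCast]
    rw [hpK]
    have hnval : (n : ℝ) = p ^ (-L) := by
      have h1 : ((1:ℝ)/p) ^ L = (n : ℝ) := by
        rw [hL]
        exact Real.rpow_logb (by positivity) (ne_of_gt hbase) (by exact_mod_cast hn1)
      rw [← h1, one_div, Real.inv_rpow hp0.le, ← Real.rpow_neg hp0.le]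
    rw [hnval, ← Real.rpow_add hp0]
    apply Real.rpow_le_rpow_of_exponent_ge hp0 hp1.le
    rw [hKcast]
    linarith
  -- Cauchy-Schwarz
  have hsum_μ : ∑ A : Finset α, μ A = 1 := sum_pm_eq_one w
  have hsum_π : ∑ A : Finset α, π A = 1 := sum_pm_eq_one _
  have hchi_sum : ∑ A : Finset α, (μ A - π A) ^ 2 / π A
      = (∑ A : Finset α, μ A ^ 2 / π A) - 1 := by
    have : ∀ A : Finset α, (μ A - π A) ^ 2 / π A = μ A ^ 2 / π A - 2 * μ A + π A := by
      intro A
      have hπA := (hπpos A).ne'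
      field_simp
      ring
    simp_rw [this]
    rw [Finset.sum_add_distrib, Finset.sum_sub_distrib, ← Finset.mul_sum, hsum_μ, hsum_π]
    ring
  have hCS : (∑ A : Finset α, |μ A - π A|) ^ 2
      ≤ ∑ A : Finset α, (μ A - π A) ^ 2 / π A := by
    have h1 : ∀ A : Finset α, |μ A - π A|
        = Real.sqrt (π A) * Real.sqrt ((μ A - π A) ^ 2 / π A) := by
      intro A
      rw [← Real.sqrt_mul (hπpos A).le, mul_div_cancel₀ _ (hπpos A).ne',
        Real.sqrt_sq_eq_abs]
    calc (∑ A : Finset α, |μ A - π A|) ^ 2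
        = (∑ A : Finset α, Real.sqrt (π A) * Real.sqrt ((μ A - π A) ^ 2 / π A)) ^ 2 := by
          simp_rw [h1]
      _ ≤ (∑ A : Finset α, Real.sqrt (π A) ^ 2)
            * ∑ A : Finset α, Real.sqrt ((μ A - π A) ^ 2 / π A) ^ 2 :=
          Finset.sum_mul_sq_le_sq_mul_sq _ _ _
      _ = ∑ A : Finset α, (μ A - π A) ^ 2 / π A := by
          have e1 : ∀ A : Finset α, Real.sqrt (π A) ^ 2 = π A :=
            fun A => Real.sq_sqrt (hπpos A).le
          have e2 : ∀ A : Finset α, Real.sqrt ((μ A - π A) ^ 2 / π A) ^ 2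
              = (μ A - π A) ^ 2 / π A :=
            fun A => Real.sq_sqrt (div_nonneg (sq_nonneg _) (hπpos A).le)
          simp_rw [e1, e2, hsum_π, one_mul]
  -- assemble
  have hfin : (∑ A : Finset α, |μ A - π A|) ^ 2 ≤ Real.exp (p ^ (2 * c - 1)) - 1 := by
    calc (∑ A : Finset α, |μ A - π A|) ^ 2
        ≤ ∑ A : Finset α, (μ A - π A) ^ 2 / π A := hCS
      _ = (∑ A : Finset α, μ A ^ 2 / π A) - 1 := hchi_sum
      _ = (∏ a, (w a ^ 2 / ws + (1 - w a) ^ 2 / (1 - ws))) - 1 := by rw [hchi_id]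
      _ ≤ (1 + p ^ K) ^ n - 1 := by linarith [hprod_le]
      _ ≤ Real.exp ((n:ℝ) * p ^ K) - 1 := by linarith [hexp1]
      _ ≤ Real.exp (p ^ (2 * c - 1)) - 1 := by
          have := Real.exp_le_exp.2 hkey
          linarith
  have hnn : 0 ≤ ∑ A : Finset α, |μ A - π A| :=
    Finset.sum_nonneg fun A _ => abs_nonneg _
  have : ∑ A : Finset α, |μ A - π A| ≤ Real.sqrt (Real.exp (p ^ (2 * c - 1)) - 1) :=
    Real.le_sqrt_of_sq_le hfin
  linarith
end
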